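/- arXiv:1208.2015 — 6 statements merged into one kernel-verified Lean document; each statement's English description precedes it below -/
import Mathlib

section
/- Let n ≥ 1, Φ ∈ ℝ^{n×n}, K = ΦΦᵀ, γ > 0, and let I ⊆ {1,…,n} be nonempty with |I| = p. Write Φ_I ∈ ℝ^{p×n} for the rows of Φ indexed by I, set Ψ = Φ((1/n)ΦᵀΦ + γI)^{-1/2} ∈ ℝ^{n×n}, N_γ = Φ_Iᵀ(Φ_I Φ_Iᵀ + pγ I_p)^{-1} Φ_I and L_γ = Φ N_γ Φᵀ. Let 0 ≤ t < 1 and suppose λ_max[(1/n)ΨᵀΨ − (1/p)Ψ_Iᵀ Ψ_I] ≤ t, where Ψ_I is the submatrix of Ψ with rows indexed by I. Then 0 ⪯ K − L_γ ⪯ (nγ/(1−t)) · K(K + nγI)^{-1} ⪯ (nγ/(1−t)) · I, where A ⪯ B means B − A is positive semidefinite. -/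
open Matrix

/-- Largest eigenvalue of a symmetric real matrix, expressed via the Rayleigh quotient:
`λ_max(M) = sup { vᵀ M v : ‖v‖ = 1 }`. -/
noncomputable def lamMax {r : ℕ} (M : Matrix (Fin r) (Fin r) ℝ) : ℝ :=
  sSup {x : ℝ | ∃ v : Fin r → ℝ, (∑ i, v i ^ 2) = 1 ∧ x = v ⬝ᵥ M.mulVec v}

section Aux

variable {m : Type*} [Fintype m] [DecidableEq m] {l : Type*} [Fintype l] [DecidableEq l]

lemma aux_smul_psd {M : Matrix m m ℝ} (h : M.PosSemidef) {c : ℝ} (hc : 0 ≤ c) :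
    (c • M).PosSemidef := by
  refine posSemidef_iff_dotProduct_mulVec.mpr ⟨?_, fun x => ?_⟩
  · have := h.1
    simp only [Matrix.IsHermitian, conjTranspose_smul] at *
    rw [this]
    simp
  · rw [smul_mulVec, dotProduct_smul]
    exact mul_nonneg hc (h.dotProduct_mulVec_nonneg x)

lemma aux_smul_one_posDef {c : ℝ} (hc : 0 < c) : (c • (1 : Matrix m m ℝ)).PosDef := by
  refine posDef_iff_dotProduct_mulVec.mpr ⟨?_, fun x hx => ?_⟩
  · simp [Matrix.IsHermitian]
  · rw [smul_mulVec, one_mulVec, dotProduct_smul]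
    have : (0:ℝ) < dotProduct (star x) x := by
      simpa using dotProduct_star_self_pos_iff.mpr hx
    exact mul_pos hc (by simpa using this)

lemma aux_push (A : Matrix l m ℝ) (c : ℝ) (hc : 0 < c) :
    Aᵀ * (A * Aᵀ + c • 1)⁻¹ * A = (Aᵀ * A + c • 1)⁻¹ * (Aᵀ * A) := by
  have hAAT : (A * Aᵀ).PosSemidef := by
    have := posSemidef_self_mul_conjTranspose A
    rwa [conjTranspose_eq_transpose_of_trivial] at this
  have hATA : (Aᵀ * A).PosSemidef := by
    have := posSemidef_conjTranspose_mul_self A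
    rwa [conjTranspose_eq_transpose_of_trivial] at this
  have hP : (A * Aᵀ + c • 1).PosDef := Matrix.PosDef.posSemidef_add hAAT (aux_smul_one_posDef hc)
  have hQ : (Aᵀ * A + c • 1).PosDef := Matrix.PosDef.posSemidef_add hATA (aux_smul_one_posDef hc)
  have hPd : IsUnit (A * Aᵀ + c • 1).det := hP.det_pos.ne'.isUnit
  have hQd : IsUnit (Aᵀ * A + c • 1).det := hQ.det_pos.ne'.isUnit
  have key : (Aᵀ * A + c • 1) * Aᵀ = Aᵀ * (A * Aᵀ + c • 1) := by
    rw [Matrix.add_mul, Matrix.mul_add, Matrix.smul_mul, Matrix.mul_smul, Matrix.one_mul,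
      Matrix.mul_one, Matrix.mul_assoc]
  have key2 : Aᵀ * (A * Aᵀ + c • 1)⁻¹ = (Aᵀ * A + c • 1)⁻¹ * Aᵀ := by
    have h1 : (Aᵀ * A + c • 1)⁻¹ * ((Aᵀ * A + c • 1) * Aᵀ) * (A * Aᵀ + c • 1)⁻¹
        = (Aᵀ * A + c • 1)⁻¹ * (Aᵀ * (A * Aᵀ + c • 1)) * (A * Aᵀ + c • 1)⁻¹ := by rw [key]
    rwa [← Matrix.mul_assoc, Matrix.nonsing_inv_mul _ hQd, Matrix.one_mul,
      Matrix.mul_assoc ((Aᵀ * A + c • 1)⁻¹), Matrix.mul_assoc,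
      Matrix.mul_nonsing_inv _ hPd, Matrix.mul_one] at h1
  rw [key2, Matrix.mul_assoc]

end Aux

lemma aux_lamMax_quad {r : ℕ} {M : Matrix (Fin r) (Fin r) ℝ} {t : ℝ}
    (h : lamMax M ≤ t) (v : Fin r → ℝ) : v ⬝ᵥ M *ᵥ v ≤ t * ∑ i, v i ^ 2 := by
  have hbdd : BddAbove {x : ℝ | ∃ v : Fin r → ℝ, (∑ i, v i ^ 2) = 1 ∧ x = v ⬝ᵥ M.mulVec v} := by
    refine ⟨∑ i, ∑ j, |M i j|, ?_⟩
    rintro x ⟨w, hw, rfl⟩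
    have hw1 : ∀ i, |w i| ≤ 1 := by
      intro i
      have h1 : w i ^ 2 ≤ 1 := by
        rw [← hw]
        exact Finset.single_le_sum (fun j _ => sq_nonneg (w j)) (Finset.mem_univ i)
      nlinarith [abs_nonneg (w i), sq_abs (w i)]
    calc w ⬝ᵥ M *ᵥ w = ∑ i, ∑ j, w i * (M i j * w j) := by
          simp [dotProduct, Matrix.mulVec, Finset.mul_sum]
      _ ≤ ∑ i, ∑ j, |M i j| := by
          refine Finset.sum_le_sum fun i _ => Finset.sum_le_sum fun j _ => ?_
          calc w i * (M i j * w j) ≤ |w i * (M i j * w j)| := le_abs_self _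
            _ = |w i| * |M i j| * |w j| := by rw [abs_mul, abs_mul]; ring
            _ ≤ 1 * |M i j| * 1 := by
                have h1 := hw1 i; have h2 := hw1 j
                gcongr <;> positivity
            _ = |M i j| := by ring
  set s := ∑ i, v i ^ 2 with hs
  have hs0 : 0 ≤ s := Finset.sum_nonneg fun i _ => sq_nonneg _
  rcases eq_or_lt_of_le hs0 with hz | hpos
  · have hv : v = 0 := by
      funext i
      have h1 := (Finset.sum_eq_zero_iff_of_nonneg (fun j _ => sq_nonneg (v j))).mp hz.symm
        i (Finset.mem_univ i)
      exact pow_eq_zero_iff (two_ne_zero) |>.mp h1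
    rw [hv]
    simp [← hz]
  · have hsq : 0 < Real.sqrt s := Real.sqrt_pos.mpr hpos
    set u : Fin r → ℝ := (Real.sqrt s)⁻¹ • v with hu
    have hcoef : (Real.sqrt s)⁻¹ * (Real.sqrt s)⁻¹ = s⁻¹ := by
      rw [← mul_inv, Real.mul_self_sqrt hs0]
    have hu1 : (∑ i, u i ^ 2) = 1 := by
      simp only [hu, Pi.smul_apply, smul_eq_mul, mul_pow, ← Finset.mul_sum]
      rw [pow_two, hcoef, inv_mul_cancel₀ hpos.ne']
    have hmem : u ⬝ᵥ M *ᵥ u ∈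
        {x : ℝ | ∃ w : Fin r → ℝ, (∑ i, w i ^ 2) = 1 ∧ x = w ⬝ᵥ M.mulVec w} := ⟨u, hu1, rfl⟩
    have hle : u ⬝ᵥ M *ᵥ u ≤ t := le_trans (le_csSup hbdd hmem) h
    have hexp : u ⬝ᵥ M *ᵥ u = s⁻¹ * (v ⬝ᵥ M *ᵥ v) := by
      rw [hu, Matrix.mulVec_smul, smul_dotProduct, dotProduct_smul, smul_eq_mul, smul_eq_mul,
        ← mul_assoc, hcoef]
    rw [hexp] at hle
    have := mul_le_mul_of_nonneg_left hle hpos.le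
    rw [← mul_assoc, mul_inv_cancel₀ hpos.ne', one_mul] at this
    linarith

lemma aux_inv_bound {m : Type*} [Fintype m] [DecidableEq m] {M : Matrix m m ℝ} {c : ℝ}
    (hc : 0 < c) (hsym : Mᵀ = M) (hM : ∀ v : m → ℝ, c * ∑ i, v i ^ 2 ≤ v ⬝ᵥ M *ᵥ v)
    (hunit : IsUnit M.det) :
    ((1 : Matrix m m ℝ) - c • M⁻¹).PosSemidef := by
  refine posSemidef_iff_dotProduct_mulVec.mpr ⟨?_, fun x => ?_⟩
  · show (1 - c • M⁻¹)ᴴ = _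
    rw [conjTranspose_eq_transpose_of_trivial, transpose_sub, transpose_smul, transpose_one,
      transpose_nonsing_inv, hsym]
  · set w := M⁻¹ *ᵥ x with hw
    have hx : M *ᵥ w = x := by
      rw [hw, Matrix.mulVec_mulVec, Matrix.mul_nonsing_inv _ hunit, Matrix.one_mulVec]
    have hform : star x ⬝ᵥ ((1 - c • M⁻¹) *ᵥ x) = (∑ i, x i ^ 2) - c * (w ⬝ᵥ M *ᵥ w) := by
      rw [star_trivial, Matrix.sub_mulVec, dotProduct_sub, Matrix.one_mulVec,
        smul_mulVec, dotProduct_smul, ← hw]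
      congr 1
      · simp [dotProduct, pow_two]
      · rw [smul_eq_mul]
        congr 1
        rw [← hx]
        exact dotProduct_comm _ _
    rw [hform]
    set a := w ⬝ᵥ M *ᵥ w with ha
    set q := ∑ i, x i ^ 2 with hq
    set s := ∑ i, w i ^ 2 with hss
    have hq0 : 0 ≤ q := Finset.sum_nonneg fun i _ => sq_nonneg _
    have hs0 : 0 ≤ s := Finset.sum_nonneg fun i _ => sq_nonneg _
    have hcs : a ^ 2 ≤ s * q := by
      have h1 : a = ∑ i, w i * x i := by
        rw [ha, hx]
        rfl
      calc a ^ 2 = (∑ i, w i * x i) ^ 2 := by rw [h1]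
        _ ≤ (∑ i, w i ^ 2) * ∑ i, x i ^ 2 :=
            Finset.sum_mul_sq_le_sq_mul_sq Finset.univ w x
        _ = s * q := rfl
    have hlb : c * s ≤ a := hM w
    rcases le_or_gt a 0 with h0 | hpos
    · have : c * a ≤ 0 := mul_nonpos_of_nonneg_of_nonpos hc.le h0
      linarith
    · have h1 : c * (a * a) ≤ a * q := by
        calc c * (a * a) = (c * a) * a := by ring
          _ ≤ (c * s) * q * 1 := by nlinarith [hcs]
          _ ≤ a * q := by nlinarith
      nlinarith


/-- if the subsampled whitened covariance is close to the full one
(`λ_max[(1/n)ΨᵀΨ − (1/p)Ψ_IᵀΨ_I] ≤ t < 1`), then the regularized Nyström approximation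
`L_γ = Φ N_γ Φᵀ` satisfies `0 ⪯ K − L_γ ⪯ (nγ/(1−t)) K(K+nγI)⁻¹ ⪯ (nγ/(1−t)) I`. -/
theorem stmt5 {n : ℕ} (hn : 1 ≤ n) (Φ K : Matrix (Fin n) (Fin n) ℝ)
    (hK : K = Φ * Φᵀ) (γ : ℝ) (hγ : 0 < γ)
    (I : Finset (Fin n)) (hI : I.Nonempty) (p : ℕ) (hp : I.card = p)
    (ΦI : Matrix {i // i ∈ I} (Fin n) ℝ)
    (hΦI : ΦI = Φ.submatrix (fun x : {i // i ∈ I} => (x : Fin n)) id)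
    (Nγ : Matrix (Fin n) (Fin n) ℝ)
    (hN : Nγ = ΦIᵀ * (ΦI * ΦIᵀ + ((p : ℝ) * γ) • 1)⁻¹ * ΦI)
    (Lγ : Matrix (Fin n) (Fin n) ℝ) (hLγ : Lγ = Φ * Nγ * Φᵀ)
    -- `S` is the inverse square root of `(1/n)ΦᵀΦ + γI` (the unique positive semidefinite
    -- matrix squaring to its inverse), and `Ψ = Φ S`.
    (S : Matrix (Fin n) (Fin n) ℝ) (hSpsd : S.PosSemidef)
    (hS : S * S = ((1 / (n : ℝ)) • (Φᵀ * Φ) + γ • 1)⁻¹)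
    (Ψ : Matrix (Fin n) (Fin n) ℝ) (hΨ : Ψ = Φ * S)
    (t : ℝ) (ht0 : 0 ≤ t) (ht1 : t < 1)
    (hconc : lamMax
        ((1 / (n : ℝ)) • (Ψᵀ * Ψ) -
          (1 / (p : ℝ)) •
            ((Ψ.submatrix (fun x : {i // i ∈ I} => (x : Fin n)) id)ᵀ *
              Ψ.submatrix (fun x : {i // i ∈ I} => (x : Fin n)) id)) ≤ t) :
    (K - Lγ).PosSemidef
      ∧ (((n : ℝ) * γ / (1 - t)) • (K * (K + ((n : ℝ) * γ) • 1)⁻¹) - (K - Lγ)).PosSemidef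
      ∧ (((n : ℝ) * γ / (1 - t)) • (1 : Matrix (Fin n) (Fin n) ℝ)
          - ((n : ℝ) * γ / (1 - t)) • (K * (K + ((n : ℝ) * γ) • 1)⁻¹)).PosSemidef := by
  classical
  have hp0 : 0 < p := hp ▸ Finset.card_pos.mpr hI
  have hpR : (0:ℝ) < (p:ℝ) := by exact_mod_cast hp0
  have hnR : (0:ℝ) < (n:ℝ) := by exact_mod_cast hn
  have h1t : (0:ℝ) < 1 - t := by linarith
  have hST : Sᵀ = S := by
    rw [← conjTranspose_eq_transpose_of_trivial]
    exact hSpsd.1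
  -- D and its properties
  set D : Matrix (Fin n) (Fin n) ℝ := (1 / (n:ℝ)) • (Φᵀ * Φ) + γ • 1 with hD
  have hΦTΦ : (Φᵀ * Φ).PosSemidef := by
    have := posSemidef_conjTranspose_mul_self Φ
    rwa [conjTranspose_eq_transpose_of_trivial] at this
  have hDpd : D.PosDef :=
    Matrix.PosDef.posSemidef_add (aux_smul_psd hΦTΦ (by positivity)) (aux_smul_one_posDef hγ)
  have hDdet : IsUnit D.det := hDpd.det_pos.ne'.isUnit
  have hSS : S * S = D⁻¹ := hS
  have hSdet : IsUnit S.det := by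
    have h1 : S.det * S.det = D⁻¹.det := by rw [← det_mul, hSS]
    have h2 : (0:ℝ) < D⁻¹.det := hDpd.inv.det_pos
    have h3 : S.det ≠ 0 := by
      intro h
      rw [h, mul_zero] at h1
      exact h2.ne h1
    exact h3.isUnit
  have hScomm : D * S = S * D := by
    have h1 : S * D⁻¹ = D⁻¹ * S := by
      rw [← hSS, Matrix.mul_assoc]
    calc D * S = D * S * (D⁻¹ * D) := by rw [Matrix.nonsing_inv_mul _ hDdet, Matrix.mul_one]
      _ = D * (S * D⁻¹) * D := by
          rw [Matrix.mul_assoc D S (D⁻¹ * D), ← Matrix.mul_assoc S D⁻¹ D,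
            ← Matrix.mul_assoc D (S * D⁻¹) D]
      _ = D * (D⁻¹ * S) * D := by rw [h1]
      _ = S * D := by
          rw [← Matrix.mul_assoc D D⁻¹ S, Matrix.mul_nonsing_inv _ hDdet, Matrix.one_mul]
  have hSDS : S * D * S = 1 := by
    calc S * D * S = D * S * S := by rw [← hScomm]
      _ = D * (S * S) := Matrix.mul_assoc _ _ _
      _ = D * D⁻¹ := by rw [hSS]
      _ = 1 := Matrix.mul_nonsing_inv _ hDdet
  -- E and Nγ
  set G : Matrix (Fin n) (Fin n) ℝ := ΦIᵀ * ΦI with hG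
  have hGpsd : G.PosSemidef := by
    have := posSemidef_conjTranspose_mul_self ΦI
    rwa [conjTranspose_eq_transpose_of_trivial] at this
  have hpγ : (0:ℝ) < (p:ℝ) * γ := mul_pos hpR hγ
  set E : Matrix (Fin n) (Fin n) ℝ := G + ((p:ℝ) * γ) • 1 with hE
  have hEpd : E.PosDef := Matrix.PosDef.posSemidef_add hGpsd (aux_smul_one_posDef hpγ)
  have hEdet : IsUnit E.det := hEpd.det_pos.ne'.isUnit
  have hNN : Nγ = E⁻¹ * G := by rw [hN, aux_push ΦI _ hpγ]
  have hone : (1 : Matrix (Fin n) (Fin n) ℝ) - Nγ = ((p:ℝ) * γ) • E⁻¹ := by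
    have h1 : (1 : Matrix (Fin n) (Fin n) ℝ) - Nγ = E⁻¹ * (E - G) := by
      rw [Matrix.mul_sub, hNN, Matrix.nonsing_inv_mul _ hEdet]
    rw [h1, hE, add_sub_cancel_left, Matrix.mul_smul, Matrix.mul_one]
  have hKL : K - Lγ = ((p:ℝ) * γ) • (Φ * E⁻¹ * Φᵀ) := by
    rw [hK, hLγ]
    calc Φ * Φᵀ - Φ * Nγ * Φᵀ = Φ * (1 - Nγ) * Φᵀ := by
          rw [Matrix.mul_sub, Matrix.sub_mul, Matrix.mul_one]
      _ = Φ * (((p:ℝ) * γ) • E⁻¹) * Φᵀ := by rw [hone]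
      _ = ((p:ℝ) * γ) • (Φ * E⁻¹ * Φᵀ) := by rw [Matrix.mul_smul, Matrix.smul_mul]
  have claim1 : (K - Lγ).PosSemidef := by
    rw [hKL]
    have h1 := hEpd.inv.posSemidef.mul_mul_conjTranspose_same Φ
    rw [conjTranspose_eq_transpose_of_trivial] at h1
    exact aux_smul_psd h1 hpγ.le
  -- P and representation of K * P⁻¹
  have hnγ : (0:ℝ) < (n:ℝ) * γ := mul_pos hnR hγ
  set P : Matrix (Fin n) (Fin n) ℝ := K + ((n:ℝ) * γ) • 1 with hP
  have hKpsd : K.PosSemidef := by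
    rw [hK]
    have := posSemidef_self_mul_conjTranspose Φ
    rwa [conjTranspose_eq_transpose_of_trivial] at this
  have hPpd : P.PosDef := Matrix.PosDef.posSemidef_add hKpsd (aux_smul_one_posDef hnγ)
  have hPdet : IsUnit P.det := hPpd.det_pos.ne'.isUnit
  have hnD : ((n:ℝ)) • D = Φᵀ * Φ + ((n:ℝ) * γ) • 1 := by
    rw [hD, smul_add, smul_smul, smul_smul]
    congr 1
    rw [mul_one_div, div_self hnR.ne', one_smul]
  have hinvnD : (Φᵀ * Φ + ((n:ℝ) * γ) • 1)⁻¹ = (1/(n:ℝ)) • (S * S) := by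
    rw [← hnD]
    apply Matrix.inv_eq_left_inv
    rw [hSS, Matrix.smul_mul, Matrix.mul_smul, smul_smul, Matrix.nonsing_inv_mul _ hDdet]
    rw [show (1/(n:ℝ)) * (n:ℝ) = 1 by field_simp, one_smul]
  have hcommKP : K * P⁻¹ = P⁻¹ * K := by
    have h1 : K * P = P * K := by
      rw [hP, Matrix.mul_add, Matrix.add_mul, Matrix.mul_smul, Matrix.smul_mul, Matrix.mul_one,
        Matrix.one_mul]
    have h2 : P * (K * P⁻¹) = K := by
      rw [← Matrix.mul_assoc, ← h1, Matrix.mul_assoc, Matrix.mul_nonsing_inv _ hPdet,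
        Matrix.mul_one]
    calc K * P⁻¹ = P⁻¹ * (P * (K * P⁻¹)) := by
          rw [← Matrix.mul_assoc, Matrix.nonsing_inv_mul _ hPdet, Matrix.one_mul]
      _ = P⁻¹ * K := by rw [h2]
  have hpush2 := aux_push Φᵀ ((n:ℝ) * γ) hnγ
  rw [transpose_transpose] at hpush2
  have hKrep : K * P⁻¹ = (1/(n:ℝ)) • (Ψ * Ψᵀ) := by
    rw [hcommKP, hP, hK, ← hpush2, hinvnD, hΨ, transpose_mul, hST,
      Matrix.mul_smul, Matrix.smul_mul]
    congr 1
    simp only [Matrix.mul_assoc]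
  -- claim 3
  have hinvrep : (1 : Matrix (Fin n) (Fin n) ℝ) - K * P⁻¹ = ((n:ℝ) * γ) • P⁻¹ := by
    have h1 : P * P⁻¹ = 1 := Matrix.mul_nonsing_inv _ hPdet
    rw [hP, Matrix.add_mul, Matrix.smul_mul, Matrix.one_mul] at h1
    rw [← h1]
    abel
  have claim3 : (((n:ℝ) * γ / (1 - t)) • (1 : Matrix (Fin n) (Fin n) ℝ)
      - ((n:ℝ) * γ / (1 - t)) • (K * P⁻¹)).PosSemidef := by
    rw [← smul_sub, hinvrep, smul_smul]
    exact aux_smul_psd hPpd.inv.posSemidef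
      (mul_nonneg (div_nonneg hnγ.le h1t.le) hnγ.le)
  -- hconc processing
  have hΨI : Ψ.submatrix (fun x : {i // i ∈ I} => (x : Fin n)) id = ΦI * S := by
    rw [hΨ, hΦI]
    ext i j
    simp [Matrix.mul_apply, Matrix.submatrix_apply]
  set W : Matrix (Fin n) (Fin n) ℝ := S * E * S with hW
  set Mm : Matrix (Fin n) (Fin n) ℝ := (1/(p:ℝ)) • W with hMm
  have hA1 : (1/(n:ℝ)) • (Ψᵀ * Ψ) = 1 - γ • (S * S) := by
    rw [hΨ, transpose_mul, hST]
    have h1 : S * Φᵀ * (Φ * S) = S * (Φᵀ * Φ) * S := by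
      simp only [Matrix.mul_assoc]
    rw [h1]
    have h2 : (1/(n:ℝ)) • (S * (Φᵀ * Φ) * S) = S * ((1/(n:ℝ)) • (Φᵀ * Φ)) * S := by
      rw [Matrix.mul_smul, Matrix.smul_mul]
    rw [h2]
    have h3 : (1/(n:ℝ)) • (Φᵀ * Φ) = D - γ • 1 := by
      rw [hD]
      abel
    rw [h3, Matrix.mul_sub, Matrix.sub_mul, hSDS, Matrix.mul_smul, Matrix.mul_one,
      Matrix.smul_mul]
  have hB1 : (ΦI * S)ᵀ * (ΦI * S) = S * G * S := by
    rw [transpose_mul, hST, hG]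
    simp only [Matrix.mul_assoc]
  have hM1 : Mm = (1/(p:ℝ)) • (S * G * S) + γ • (S * S) := by
    rw [hMm, hW, hE, Matrix.mul_add, Matrix.add_mul, smul_add]
    congr 1
    rw [Matrix.mul_smul, Matrix.smul_mul, smul_smul, Matrix.mul_one,
      show (1/(p:ℝ)) * ((p:ℝ) * γ) = γ by field_simp]
  have hmat : (1 / (n : ℝ)) • (Ψᵀ * Ψ) -
      (1 / (p : ℝ)) •
        ((Ψ.submatrix (fun x : {i // i ∈ I} => (x : Fin n)) id)ᵀ *
          Ψ.submatrix (fun x : {i // i ∈ I} => (x : Fin n)) id) = 1 - Mm := by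
    rw [hΨI, hB1, hA1, hM1]
    abel
  rw [hmat] at hconc
  have hMlb : ∀ v : Fin n → ℝ, (1 - t) * ∑ i, v i ^ 2 ≤ v ⬝ᵥ Mm *ᵥ v := by
    intro v
    have h1 := aux_lamMax_quad hconc v
    have h2 : v ⬝ᵥ ((1 : Matrix (Fin n) (Fin n) ℝ) - Mm) *ᵥ v
        = (∑ i, v i ^ 2) - v ⬝ᵥ Mm *ᵥ v := by
      rw [Matrix.sub_mulVec, dotProduct_sub, Matrix.one_mulVec]
      congr 1
      simp [dotProduct, pow_two]
    rw [h2] at h1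
    nlinarith [h1]
  have hEsym : Eᵀ = E := by
    rw [hE, transpose_add, transpose_smul, transpose_one, hG, transpose_mul, transpose_transpose]
  have hMmsym : Mmᵀ = Mm := by
    rw [hMm, transpose_smul, hW, transpose_mul, transpose_mul, hST, hEsym, ← Matrix.mul_assoc]
  have hWdet : IsUnit W.det := by
    rw [hW, det_mul, det_mul]
    exact (hSdet.mul hEdet).mul hSdet
  have hMmdet : IsUnit Mm.det := by
    rw [hMm, det_smul]
    exact ((isUnit_iff_ne_zero.mpr (one_div_ne_zero hpR.ne')).pow _).mul hWdet
  have hX : ((1 : Matrix (Fin n) (Fin n) ℝ) - (1 - t) • Mm⁻¹).PosSemidef :=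
    aux_inv_bound h1t hMmsym hMlb hMmdet
  have hMminv : Mm⁻¹ = (p:ℝ) • (S⁻¹ * E⁻¹ * S⁻¹) := by
    apply Matrix.inv_eq_right_inv
    rw [hMm, hW, Matrix.smul_mul, Matrix.mul_smul, smul_smul,
      show (1/(p:ℝ)) * (p:ℝ) = 1 by field_simp, one_smul]
    simp only [Matrix.mul_assoc]
    rw [← Matrix.mul_assoc S S⁻¹, Matrix.mul_nonsing_inv _ hSdet, Matrix.one_mul,
      ← Matrix.mul_assoc E E⁻¹, Matrix.mul_nonsing_inv _ hEdet, Matrix.one_mul,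
      Matrix.mul_nonsing_inv _ hSdet]
  have hconj : Ψ * Mm⁻¹ * Ψᵀ = (p:ℝ) • (Φ * E⁻¹ * Φᵀ) := by
    rw [hMminv, hΨ, transpose_mul, hST, Matrix.mul_smul, Matrix.smul_mul]
    congr 1
    simp only [Matrix.mul_assoc]
    rw [← Matrix.mul_assoc S⁻¹ S, Matrix.nonsing_inv_mul _ hSdet, Matrix.one_mul,
      ← Matrix.mul_assoc S S⁻¹, Matrix.mul_nonsing_inv _ hSdet, Matrix.one_mul]
  have hKL2 : K - Lγ = γ • (Ψ * Mm⁻¹ * Ψᵀ) := by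
    rw [hKL, hconj, smul_smul, mul_comm γ (p:ℝ)]
  have claim2 : (((n:ℝ) * γ / (1 - t)) • (K * P⁻¹) - (K - Lγ)).PosSemidef := by
    have hexp : ((n:ℝ) * γ / (1 - t)) • (K * P⁻¹) - (K - Lγ)
        = (γ / (1 - t)) • (Ψ * ((1 : Matrix (Fin n) (Fin n) ℝ) - (1 - t) • Mm⁻¹) * Ψᵀ) := by
      rw [hKrep, hKL2, smul_smul,
        show (n:ℝ) * γ / (1 - t) * (1/(n:ℝ)) = γ / (1 - t) by field_simp]
      rw [Matrix.mul_sub, Matrix.sub_mul, Matrix.mul_one, Matrix.mul_smul, Matrix.smul_mul,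
        smul_sub, smul_smul, show γ / (1 - t) * (1 - t) = γ by field_simp]
    rw [hexp]
    have h1 := hX.mul_mul_conjTranspose_same Ψ
    rw [conjTranspose_eq_transpose_of_trivial] at h1
    exact aux_smul_psd h1 (div_nonneg hγ.le h1t.le)
  exact ⟨claim1, claim2, claim3⟩
end

section
/- Let K ∈ ℝ^{n×n} be symmetric positive semidefinite and let 0 < γ ≤ λ. Then K(K + nγI)^{-1} ⪯ (λ/γ) · K(K + nλI)^{-1} in the Loewner order. In particular, every diagonal entry satisfies (K(K + nγI)^{-1})_{ii} ≤ (λ/γ)(K(K + nλI)^{-1})_{ii}, and hence n · max_i (K(K + nγI)^{-1})_{ii} ≤ (λ/γ) d, where d = n · max_i (K(K + nλI)^{-1})_{ii} is the maximal marginal degrees of freedom at level λ. -/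
open Matrix

lemma psd_smul_aux {n : ℕ} {M : Matrix (Fin n) (Fin n) ℝ} (hM : M.PosSemidef) {c : ℝ}
    (hc : 0 ≤ c) : (c • M).PosSemidef := by
  refine .of_dotProduct_mulVec_nonneg ?_ fun x => ?_
  · unfold Matrix.IsHermitian
    rw [conjTranspose_smul, hM.1]
    simp
  · rw [smul_mulVec, dotProduct_smul, smul_eq_mul]
    exact mul_nonneg hc (hM.dotProduct_mulVec_nonneg x)

lemma psd_diag_nonneg {n : ℕ} {M : Matrix (Fin n) (Fin n) ℝ} (hM : M.PosSemidef) (i : Fin n) :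
    0 ≤ M i i := by
  exact hM.diag_nonneg

/-- for `K` symmetric positive semidefinite and `0 < γ ≤ λ`,
`K(K + nγI)⁻¹ ⪯ (λ/γ) K(K + nλI)⁻¹`; in particular the diagonal entries satisfy the same
inequality and `n·max_i (K(K+nγI)⁻¹)_{ii} ≤ (λ/γ) d` where
`d = n·max_i (K(K+nλI)⁻¹)_{ii}`. -/
theorem stmt7 {n : ℕ} (hn : 1 ≤ n) (K : Matrix (Fin n) (Fin n) ℝ) (hK : K.PosSemidef)
    (γ lam : ℝ) (hγ : 0 < γ) (hγlam : γ ≤ lam)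
    (d : ℝ) (hd : d = (n : ℝ) * ⨆ i, (K * (K + ((n : ℝ) * lam) • 1)⁻¹) i i) :
    ((lam / γ) • (K * (K + ((n : ℝ) * lam) • 1)⁻¹)
        - K * (K + ((n : ℝ) * γ) • 1)⁻¹).PosSemidef
      ∧ (∀ i, (K * (K + ((n : ℝ) * γ) • 1)⁻¹) i i
          ≤ (lam / γ) * (K * (K + ((n : ℝ) * lam) • 1)⁻¹) i i)
      ∧ (n : ℝ) * (⨆ i, (K * (K + ((n : ℝ) * γ) • 1)⁻¹) i i) ≤ (lam / γ) * d := by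
  have hn0 : (0:ℝ) < n := by exact_mod_cast hn
  have hlam : 0 < lam := lt_of_lt_of_le hγ hγlam
  set a : ℝ := (n : ℝ) * γ with ha
  set b : ℝ := (n : ℝ) * lam with hb
  have ha0 : 0 < a := mul_pos hn0 hγ
  have hb0 : 0 < b := mul_pos hn0 hlam
  have hab : a ≤ b := mul_le_mul_of_nonneg_left hγlam hn0.le
  have hba : lam / γ = b / a := by
    rw [ha, hb, mul_div_mul_left _ _ hn0.ne']
  set A := K + a • (1 : Matrix (Fin n) (Fin n) ℝ) with hAdef
  set B := K + b • (1 : Matrix (Fin n) (Fin n) ℝ) with hBdef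
  have hsmul_diag : ∀ c : ℝ, c • (1 : Matrix (Fin n) (Fin n) ℝ) = diagonal (fun _ => c) := by
    intro c
    ext i j
    simp [diagonal_apply, one_apply, mul_ite]
  have hApd : A.PosDef := by
    rw [hAdef, hsmul_diag]
    exact Matrix.PosDef.posSemidef_add hK (Matrix.PosDef.diagonal (fun _ => ha0))
  have hBpd : B.PosDef := by
    rw [hBdef, hsmul_diag]
    exact Matrix.PosDef.posSemidef_add hK (Matrix.PosDef.diagonal (fun _ => hb0))
  have hAu : IsUnit A.det := hApd.det_pos.ne'.isUnit
  have hBu : IsUnit B.det := hBpd.det_pos.ne'.isUnit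
  -- commutation facts
  have commKA : K * A = A * K := by
    rw [hAdef, mul_add, add_mul, Matrix.mul_smul, Matrix.smul_mul, Matrix.mul_one, Matrix.one_mul]
  have commKB : K * B = B * K := by
    rw [hBdef, mul_add, add_mul, Matrix.mul_smul, Matrix.smul_mul, Matrix.mul_one, Matrix.one_mul]
  have commAB : A * B = B * A := by
    simp only [hAdef, hBdef, mul_add, add_mul, Matrix.mul_smul, Matrix.smul_mul,
      Matrix.mul_one, Matrix.one_mul, smul_smul]
    rw [mul_comm a b]
    abel
  have commBinvA : B⁻¹ * A = A * B⁻¹ := by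
    calc B⁻¹ * A = B⁻¹ * (A * B) * B⁻¹ := by
          rw [Matrix.mul_assoc, Matrix.mul_nonsing_inv_cancel_right _ _ hBu]
      _ = B⁻¹ * (B * A) * B⁻¹ := by rw [commAB]
      _ = A * B⁻¹ := by rw [Matrix.nonsing_inv_mul_cancel_left _ _ hBu]
  -- the key identity
  have hABu : IsUnit (A * B).det := by rw [det_mul]; exact hAu.mul hBu
  have hkey : (lam / γ) • (K * B⁻¹) - K * A⁻¹
      = ((b - a) / a) • (K * (A⁻¹ * B⁻¹) * K) := by
    have hmul : ((lam / γ) • (K * B⁻¹) - K * A⁻¹) * (A * B)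
        = (((b - a) / a) • (K * (A⁻¹ * B⁻¹) * K)) * (A * B) := by
      have lhs1 : (K * B⁻¹) * (A * B) = K * A := by
        rw [commAB, ← Matrix.mul_assoc, Matrix.mul_assoc K B⁻¹ B,
          Matrix.nonsing_inv_mul _ hBu, Matrix.mul_one]
      have lhs2 : (K * A⁻¹) * (A * B) = K * B := by
        rw [← Matrix.mul_assoc, Matrix.mul_assoc K A⁻¹ A,
          Matrix.nonsing_inv_mul _ hAu, Matrix.mul_one]
      have commKAB : K * (A * B) = (A * B) * K := by
        rw [← Matrix.mul_assoc, commKA, Matrix.mul_assoc, commKB, ← Matrix.mul_assoc]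
      have rhs1 : (K * (A⁻¹ * B⁻¹) * K) * (A * B) = K * K := by
        have h2 : (A⁻¹ * B⁻¹) * (A * B) = 1 := by
          rw [Matrix.mul_assoc A⁻¹, ← Matrix.mul_assoc B⁻¹, commBinvA,
            Matrix.mul_assoc A, Matrix.nonsing_inv_mul _ hBu, Matrix.mul_one,
            Matrix.nonsing_inv_mul _ hAu]
        rw [Matrix.mul_assoc, commKAB, ← Matrix.mul_assoc, Matrix.mul_assoc K, h2,
          Matrix.mul_one]
      rw [sub_mul, smul_mul_assoc, smul_mul_assoc, lhs1, lhs2, rhs1, hba]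
      simp only [hAdef, hBdef, mul_add, Matrix.mul_smul, Matrix.mul_one]
      rw [smul_add, smul_smul, div_mul_cancel₀ _ ha0.ne',
        show (b - a) / a = b / a - 1 by field_simp, sub_smul, one_smul]
      abel
    calc (lam / γ) • (K * B⁻¹) - K * A⁻¹
        = ((lam / γ) • (K * B⁻¹) - K * A⁻¹) * (A * B) * (A * B)⁻¹ :=
          (Matrix.mul_nonsing_inv_cancel_right _ _ hABu).symm
      _ = (((b - a) / a) • (K * (A⁻¹ * B⁻¹) * K)) * (A * B) * (A * B)⁻¹ := by rw [hmul]
      _ = ((b - a) / a) • (K * (A⁻¹ * B⁻¹) * K) :=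
          Matrix.mul_nonsing_inv_cancel_right _ _ hABu
  -- positive semidefiniteness
  have hKK : (K * K).PosSemidef := by
    have := hK.pow 2
    rwa [pow_two] at this
  have hBA : (B * A).PosSemidef := by
    have e : B * A = K * K + ((b • K + a • K) + (a * b) • 1) := by
      simp only [hAdef, hBdef, add_mul, mul_add, Matrix.mul_smul, Matrix.smul_mul,
        Matrix.mul_one, Matrix.one_mul, smul_smul]
      abel
    rw [e]
    exact hKK.add (((psd_smul_aux hK hb0.le).add (psd_smul_aux hK ha0.le)).add
      (psd_smul_aux Matrix.PosSemidef.one (mul_pos ha0 hb0).le))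
  have hinvPSD : (A⁻¹ * B⁻¹).PosSemidef := by
    rw [← Matrix.mul_inv_rev]
    exact hBA.inv
  have hsand : (K * (A⁻¹ * B⁻¹) * K).PosSemidef := by
    have := hinvPSD.conjTranspose_mul_mul_same K
    rwa [hK.1] at this
  have hPSD : ((lam / γ) • (K * B⁻¹) - K * A⁻¹).PosSemidef := by
    rw [hkey]
    exact psd_smul_aux hsand (div_nonneg (sub_nonneg.mpr hab) ha0.le)
  refine ⟨hPSD, ?_, ?_⟩
  · intro i
    have h := psd_diag_nonneg hPSD i
    rw [Matrix.sub_apply, Matrix.smul_apply, smul_eq_mul] at h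
    linarith
  · have h2 : ∀ i, (K * A⁻¹) i i ≤ (lam / γ) * (K * B⁻¹) i i := by
      intro i
      have h := psd_diag_nonneg hPSD i
      rw [Matrix.sub_apply, Matrix.smul_apply, smul_eq_mul] at h
      linarith
    haveI : Nonempty (Fin n) := ⟨⟨0, hn⟩⟩
    have hsup : (⨆ i, (K * A⁻¹) i i) ≤ (lam / γ) * ⨆ i, (K * B⁻¹) i i := by
      apply ciSup_le
      intro i
      exact (h2 i).trans (mul_le_mul_of_nonneg_left
        (le_ciSup (f := fun j => (K * B⁻¹) j j) (Set.Finite.bddAbove (Set.finite_range _)) i)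
        (div_nonneg hlam.le hγ.le))
    rw [hd]
    calc (n : ℝ) * ⨆ i, (K * A⁻¹) i i ≤ (n : ℝ) * ((lam / γ) * ⨆ i, (K * B⁻¹) i i) :=
          mul_le_mul_of_nonneg_left hsup hn0.le
      _ = lam / γ * ((n : ℝ) * ⨆ i, (K * B⁻¹) i i) := by ring
end

section
/- Let ρ > 0 and λ > 0. Then for every n ≥ 1, Σ_{i=1}^n e^{−2ρi}/(e^{−ρi} + λ)² ≤ (1/ρ) · log( (1 + λ)/λ ). In particular, for kernel eigenvalues with exponential decay μ_i = e^{−ρi}, the renormalized variance term Σ_{i=1}^n μ_i²/(μ_i + λ)² is O(log(1/λ)) uniformly in n. -/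
/-- for exponential eigenvalue decay `μ_i = e^{−ρi}` (`ρ > 0`), the
renormalized variance term satisfies, uniformly in `n`,
`Σ_{i=1}^n e^{−2ρi}/(e^{−ρi} + λ)² ≤ (1/ρ) log((1 + λ)/λ)`. -/
theorem stmt11 (ρ : ℝ) (hρ : 0 < ρ) (lam : ℝ) (hlam : 0 < lam)
    (n : ℕ) (hn : 1 ≤ n) :
    ∑ i ∈ Finset.Icc 1 n,
        Real.exp (-2 * ρ * (i : ℝ)) / (Real.exp (-ρ * (i : ℝ)) + lam) ^ 2
      ≤ (1 / ρ) * Real.log ((1 + lam) / lam) := by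
  set F : ℝ → ℝ := fun x => Real.exp (-2 * ρ * x) / (Real.exp (-ρ * x) + lam) ^ 2 with hF
  set G : ℝ → ℝ := fun x => 1 / (1 + lam * Real.exp (ρ * x)) with hG
  have hden : ∀ x : ℝ, 0 < Real.exp (-ρ * x) + lam := fun x => by positivity
  have hGden : ∀ x : ℝ, 0 < 1 + lam * Real.exp (ρ * x) := fun x => by positivity
  have hFsq : ∀ x : ℝ, F x = (Real.exp (-ρ * x) / (Real.exp (-ρ * x) + lam)) ^ 2 := by
    intro x
    have h2 : Real.exp (-2 * ρ * x) = (Real.exp (-ρ * x)) ^ 2 := by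
      rw [sq, ← Real.exp_add]; ring_nf
    simp only [hF]
    rw [div_pow, h2]
  -- Step 1: rewrite the sum in the form needed by AntitoneOn.sum_le_integral
  have hsum : ∑ i ∈ Finset.Icc 1 n,
      Real.exp (-2 * ρ * (i : ℝ)) / (Real.exp (-ρ * (i : ℝ)) + lam) ^ 2
      = ∑ i ∈ Finset.range n, F ((0 : ℝ) + ((i + 1 : ℕ) : ℝ)) := by
    rw [← Finset.Ico_add_one_right_eq_Icc, Finset.sum_Ico_eq_sum_range]
    simp only [Nat.add_sub_cancel, Nat.succ_sub_one, hF]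
    apply Finset.sum_congr rfl
    intro i _
    push_cast
    ring_nf
  -- Step 2: F is antitone on [0, n]
  have hanti : AntitoneOn F (Set.Icc (0 : ℝ) (0 + n)) := by
    intro x hx y hy hxy
    rw [hFsq, hFsq]
    have hux : 0 < Real.exp (-ρ * x) := Real.exp_pos _
    have huy : 0 < Real.exp (-ρ * y) := Real.exp_pos _
    have hle : Real.exp (-ρ * y) ≤ Real.exp (-ρ * x) := by
      apply Real.exp_le_exp.2
      nlinarith
    have hbase : Real.exp (-ρ * y) / (Real.exp (-ρ * y) + lam)
        ≤ Real.exp (-ρ * x) / (Real.exp (-ρ * x) + lam) := by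
      rw [div_le_div_iff₀ (hden y) (hden x)]
      nlinarith
    apply pow_le_pow_left₀ (by positivity) hbase
  -- Step 3: sum ≤ ∫ F on [0, n]
  have hint1 : ∑ i ∈ Finset.range n, F ((0 : ℝ) + ((i + 1 : ℕ) : ℝ))
      ≤ ∫ x in (0 : ℝ)..(0 + n), F x := AntitoneOn.sum_le_integral hanti
  -- continuity
  have hFcont : Continuous F := by
    apply Continuous.div
    · fun_prop
    · fun_prop
    · intro x
      exact ne_of_gt (by positivity)
  have hGcont : Continuous G := by
    apply Continuous.div
    · fun_prop
    · fun_prop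
    · intro x
      exact ne_of_gt (hGden x)
  -- Step 4: F ≤ G pointwise
  have hFG : ∀ x : ℝ, F x ≤ G x := by
    intro x
    rw [hF, hG]
    rw [div_le_div_iff₀ (by positivity) (hGden x)]
    have h1 : Real.exp (ρ * x) * Real.exp (-ρ * x) = 1 := by
      rw [← Real.exp_add]; ring_nf; exact Real.exp_zero
    have h2 : Real.exp (-2 * ρ * x) = (Real.exp (-ρ * x)) ^ 2 := by
      rw [sq, ← Real.exp_add]; ring_nf
    have h3 : 0 < Real.exp (-ρ * x) := Real.exp_pos _
    have h4 : 0 < Real.exp (ρ * x) := Real.exp_pos _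
    have h5 : Real.exp (-2 * ρ * x) * Real.exp (ρ * x) = Real.exp (-ρ * x) := by
      rw [← Real.exp_add]; ring_nf
    have key : Real.exp (-2 * ρ * x) * (1 + lam * Real.exp (ρ * x))
        = Real.exp (-ρ * x) ^ 2 + lam * Real.exp (-ρ * x) := by
      linear_combination h2 + lam * h5
    rw [key, one_mul]
    nlinarith [sq_nonneg lam, mul_pos hlam h3]
  have hint2 : ∫ x in (0 : ℝ)..(0 + n), F x ≤ ∫ x in (0 : ℝ)..(0 + n), G x := by
    apply intervalIntegral.integral_mono_on (by positivity)
    · exact hFcont.intervalIntegrable _ _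
    · exact hGcont.intervalIntegrable _ _
    · intro x _
      exact hFG x
  -- Step 5: compute ∫ G via FTC
  have hderiv : ∀ x ∈ Set.uIcc (0 : ℝ) (0 + n),
      HasDerivAt (fun x => x - ρ⁻¹ * Real.log (1 + lam * Real.exp (ρ * x))) (G x) x := by
    intro x _
    have h1 : HasDerivAt (fun x : ℝ => ρ * x) ρ x := by
      simpa using (hasDerivAt_id x).const_mul ρ
    have h2 : HasDerivAt (fun x : ℝ => Real.exp (ρ * x)) (Real.exp (ρ * x) * ρ) x :=
      h1.exp
    have h3 : HasDerivAt (fun x : ℝ => 1 + lam * Real.exp (ρ * x))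
        (lam * (Real.exp (ρ * x) * ρ)) x := (h2.const_mul lam).const_add 1
    have h4 : HasDerivAt (fun x : ℝ => Real.log (1 + lam * Real.exp (ρ * x)))
        (lam * (Real.exp (ρ * x) * ρ) / (1 + lam * Real.exp (ρ * x))) x :=
      h3.log (ne_of_gt (hGden x))
    have h5 := (hasDerivAt_id x).sub (h4.const_mul ρ⁻¹)
    refine h5.congr_deriv ?_
    rw [hG]
    field_simp
    ring
  have hGint : IntervalIntegrable G MeasureTheory.volume (0 : ℝ) (0 + n) :=
    hGcont.intervalIntegrable _ _
  have hFTC : ∫ x in (0 : ℝ)..(0 + n), G x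
      = ((0 + (n : ℝ)) - ρ⁻¹ * Real.log (1 + lam * Real.exp (ρ * (0 + n))))
        - ((0 : ℝ) - ρ⁻¹ * Real.log (1 + lam * Real.exp (ρ * 0))) :=
    intervalIntegral.integral_eq_sub_of_hasDerivAt hderiv hGint
  -- Step 6: final arithmetic
  have hlog1 : Real.log ((1 + lam) / lam) = Real.log (1 + lam) - Real.log lam :=
    Real.log_div (by positivity) (ne_of_gt hlam)
  have hlog2 : Real.log lam + ρ * n ≤ Real.log (1 + lam * Real.exp (ρ * (0 + n))) := by
    have h1 : Real.log (lam * Real.exp (ρ * (0 + n)))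
        ≤ Real.log (1 + lam * Real.exp (ρ * (0 + n))) := by
      apply Real.log_le_log (by positivity)
      linarith [hGden (0 + (n : ℝ))]
    rw [Real.log_mul (ne_of_gt hlam) (ne_of_gt (Real.exp_pos _)), Real.log_exp] at h1
    linarith
  have hρinv : 0 < ρ⁻¹ := by positivity
  rw [hsum]
  calc ∑ i ∈ Finset.range n, F ((0 : ℝ) + ((i + 1 : ℕ) : ℝ))
      ≤ ∫ x in (0 : ℝ)..(0 + n), G x := le_trans hint1 hint2
    _ ≤ (1 / ρ) * Real.log ((1 + lam) / lam) := by
        rw [hFTC, hlog1]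
        simp only [mul_zero, Real.exp_zero, mul_one, one_div]
        have h6 := mul_le_mul_of_nonneg_left hlog2 (le_of_lt hρinv)
        have h8 : ρ⁻¹ * ρ * (n : ℝ) = n := by
          field_simp
        nlinarith [h6, h8]
end

section
/- Let β > 1/2 and δ > 1/2 satisfy 2δ − 4β < 1. Then there exists a constant C (depending only on β and δ) such that for all n ≥ 1 and all λ ∈ (0, 1], λ² Σ_{i=1}^n i^{4β−2δ}/(1 + λ i^{2β})² ≤ C · λ^{(2δ−1)/(2β)}. Consequently the bias term nλ² Σ_{i=1}^n i^{4β−2δ}/(1+λi^{2β})² is O(n λ^{(2δ−1)/(2β)}) in this regime. -/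
private lemma sumS13 (r : ℝ) (hr0 : r < 0) (hrne : r ≠ -1) (a b : ℕ) (ha : 1 ≤ a) (hab : a ≤ b) :
    ∑ i ∈ Finset.Icc (a+1) b, (i:ℝ) ^ r ≤ ((b:ℝ) ^ (r+1) - (a:ℝ) ^ (r+1)) / (r+1) := by
  have ha' : (1:ℝ) ≤ (a:ℝ) := by exact_mod_cast ha
  have hanti : AntitoneOn (fun t : ℝ => t ^ r) (Set.Icc (a:ℝ) (b:ℝ)) := by
    intro x hx y hy hxy
    exact Real.rpow_le_rpow_of_nonpos (by linarith [hx.1]) hxy hr0.le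
  have h1 := AntitoneOn.sum_le_integral_Ico hab hanti
  have h2 : ∫ x in (a:ℝ)..(b:ℝ), x ^ r = ((b:ℝ) ^ (r+1) - (a:ℝ) ^ (r+1)) / (r+1) := by
    apply integral_rpow
    refine Or.inr ⟨hrne, ?_⟩
    intro h0
    rw [Set.mem_uIcc] at h0
    rcases h0 with ⟨h, _⟩ | ⟨h, _⟩ <;> [linarith; nlinarith [(Nat.cast_le.2 hab : (a:ℝ) ≤ b)]]
  calc ∑ i ∈ Finset.Icc (a+1) b, (i:ℝ) ^ r
      = ∑ i ∈ Finset.Ico a b, ((i:ℝ)+1) ^ r := by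
        rw [show Finset.Icc (a+1) b = Finset.Ico (a+1) (b+1) by rw [Finset.Ico_add_one_right_eq_Icc]]
        rw [show Finset.Ico (a+1) (b+1) = Finset.map (addRightEmbedding 1) (Finset.Ico a b) by
          rw [Finset.map_add_right_Ico]]
        rw [Finset.sum_map]
        simp [addRightEmbedding]
    _ ≤ _ := by simpa using h1
    _ = _ := h2

private lemma sumA13 (p : ℝ) (hp : -1 < p) (m : ℕ) (hm : 1 ≤ m) :
    ∑ i ∈ Finset.Icc 1 m, (i:ℝ) ^ p ≤ (1 + 1/(p+1)) * (m:ℝ) ^ (p+1) := by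
  have hp1 : (0:ℝ) < p + 1 := by linarith
  have hm' : (1:ℝ) ≤ (m:ℝ) := by exact_mod_cast hm
  have hmp1 : (1:ℝ) ≤ (m:ℝ) ^ (p+1) := Real.one_le_rpow hm' hp1.le
  have hc : (1:ℝ) ≤ 1 + 1/(p+1) := by
    have : (0:ℝ) < 1/(p+1) := by positivity
    linarith
  rcases le_or_gt 0 p with hp0 | hp0
  · have h1 : ∑ i ∈ Finset.Icc 1 m, (i:ℝ) ^ p ≤ ∑ _i ∈ Finset.Icc 1 m, (m:ℝ) ^ p := by
      apply Finset.sum_le_sum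
      intro i hi
      have hi2 : (i:ℝ) ≤ (m:ℝ) := by exact_mod_cast (Finset.mem_Icc.1 hi).2
      exact Real.rpow_le_rpow (Nat.cast_nonneg i) hi2 hp0
    have hcard : ∑ _i ∈ Finset.Icc 1 m, (m:ℝ) ^ p = (m:ℝ) * (m:ℝ) ^ p := by
      rw [Finset.sum_const, Nat.card_Icc]
      simp [nsmul_eq_mul]
    have hmm : (m:ℝ) * (m:ℝ) ^ p = (m:ℝ) ^ (p+1) := by
      rw [Real.rpow_add (by linarith : (0:ℝ) < m), Real.rpow_one]; ring
    nlinarith [Real.rpow_nonneg (Nat.cast_nonneg m) (p+1)]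
  · have hsplit : ∑ i ∈ Finset.Icc 1 m, (i:ℝ) ^ p
        = ((1:ℕ):ℝ) ^ p + ∑ i ∈ Finset.Icc 2 m, (i:ℝ) ^ p := by
      rw [show Finset.Icc 2 m = Finset.Ioc 1 m from (Finset.Icc_add_one_left_eq_Ioc 1 m),
        ← Finset.Ioc_insert_left hm, Finset.sum_insert (by simp)]
    have h2 : ∑ i ∈ Finset.Icc 2 m, (i:ℝ) ^ p ≤ ((m:ℝ) ^ (p+1) - (1:ℝ) ^ (p+1)) / (p+1) :=
      by simpa using sumS13 p hp0 (by intro h; rw [h] at hp; linarith) 1 m le_rfl hm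
    have h3 : ((m:ℝ) ^ (p+1) - (1:ℝ) ^ (p+1)) / (p+1) ≤ (m:ℝ)^(p+1) / (p+1) := by
      gcongr
      simp
    have h4 : (m:ℝ)^(p+1) / (p+1) = (1/(p+1)) * (m:ℝ)^(p+1) := by ring
    simp only [Nat.cast_one, Real.one_rpow] at hsplit h2 h3 ⊢
    nlinarith

private lemma sumB13 (q : ℝ) (hq : 1 < q) (a b : ℕ) (ha : 1 ≤ a) :
    ∑ i ∈ Finset.Icc (a+1) b, (i:ℝ) ^ (-q) ≤ (a:ℝ) ^ (1-q) / (q-1) := by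
  have ha' : (1:ℝ) ≤ (a:ℝ) := by exact_mod_cast ha
  rcases le_or_gt (a+1) b with hab | hab
  · have h := sumS13 (-q) (by linarith)
      (by intro h; rw [show q = 1 by linarith] at hq; linarith) a b ha (by omega)
    have hb0 : (0:ℝ) ≤ (b:ℝ) ^ (-q+1) := Real.rpow_nonneg (Nat.cast_nonneg b) _
    calc ∑ i ∈ Finset.Icc (a+1) b, (i:ℝ) ^ (-q)
        ≤ ((b:ℝ) ^ (-q+1) - (a:ℝ) ^ (-q+1)) / (-q+1) := h
      _ = ((a:ℝ) ^ (-q+1) - (b:ℝ) ^ (-q+1)) / (q-1) := by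
          rw [div_eq_div_iff (by linarith) (by linarith)]; ring
      _ ≤ (a:ℝ) ^ (1-q) / (q-1) := by
          rw [show (1-q) = (-q+1) by ring]
          exact (div_le_div_iff_of_pos_right (by linarith)).2 (by linarith)
  · rw [Finset.Icc_eq_empty (by omega)]
    simp only [Finset.sum_empty]
    exact div_nonneg (Real.rpow_nonneg (by linarith) _) (by linarith)

/-- in the regime `2δ − 4β < 1` (`β, δ > 1/2`), there is a constant `C`
such that for all `n ≥ 1` and `λ ∈ (0,1]`,
`λ² Σ_{i=1}^n i^{4β−2δ}/(1 + λ i^{2β})² ≤ C λ^{(2δ−1)/(2β)}`; hence the bias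
term `nλ² Σ …` is `O(n λ^{(2δ−1)/(2β)})`. -/
theorem stmt13 (β δ : ℝ) (hβ : 1 / 2 < β) (hδ : 1 / 2 < δ)
    (hδβ : 2 * δ - 4 * β < 1) :
    ∃ C : ℝ, ∀ n : ℕ, 1 ≤ n → ∀ lam : ℝ, 0 < lam → lam ≤ 1 →
      (lam ^ 2 * ∑ i ∈ Finset.Icc 1 n,
          (i : ℝ) ^ (4 * β - 2 * δ) / (1 + lam * (i : ℝ) ^ (2 * β)) ^ 2
        ≤ C * lam ^ ((2 * δ - 1) / (2 * β)))
      ∧ (n : ℝ) * lam ^ 2 * ∑ i ∈ Finset.Icc 1 n,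
          (i : ℝ) ^ (4 * β - 2 * δ) / (1 + lam * (i : ℝ) ^ (2 * β)) ^ 2
        ≤ C * ((n : ℝ) * lam ^ ((2 * δ - 1) / (2 * β))) := by
  set p : ℝ := 4 * β - 2 * δ with hpdef
  set q : ℝ := 2 * δ with hqdef
  set r : ℝ := (2 * δ - 1) / (2 * β) with hrdef
  have hβ0 : (0:ℝ) < β := by linarith
  have h2β : (0:ℝ) < 2 * β := by linarith
  have hp : -1 < p := by simp only [hpdef]; linarith
  have hq : 1 < q := by simp only [hqdef]; linarith
  refine ⟨(1 + 1/(p+1)) + (2:ℝ)^(q-1)/(q-1), ?_⟩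
  have key : ∀ n : ℕ, 1 ≤ n → ∀ lam : ℝ, 0 < lam → lam ≤ 1 →
      lam ^ 2 * ∑ i ∈ Finset.Icc 1 n,
          (i : ℝ) ^ (4 * β - 2 * δ) / (1 + lam * (i : ℝ) ^ (2 * β)) ^ 2
        ≤ ((1 + 1/(p+1)) + (2:ℝ)^(q-1)/(q-1)) * lam ^ r := by
    intro n hn lam hlam hlam1
    set T : ℝ := lam ^ (-(1/(2*β))) with hTdef
    have hT1 : 1 ≤ T := Real.one_le_rpow_of_pos_of_le_one_of_nonpos hlam hlam1
      (by rw [neg_nonpos]; positivity)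
    have hT0 : 0 < T := by linarith
    set m : ℕ := ⌊T⌋₊ with hmdef
    have hm1 : 1 ≤ m := Nat.le_floor (by exact_mod_cast hT1)
    have hm1' : (1:ℝ) ≤ (m:ℝ) := by exact_mod_cast hm1
    have hmT : (m:ℝ) ≤ T := Nat.floor_le hT0.le
    have hTm : T < (m:ℝ) + 1 := Nat.lt_floor_add_one T
    -- step 1: termwise bound
    have step1 : lam ^ 2 * ∑ i ∈ Finset.Icc 1 n,
          (i : ℝ) ^ (4 * β - 2 * δ) / (1 + lam * (i : ℝ) ^ (2 * β)) ^ 2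
        ≤ ∑ i ∈ Finset.Icc 1 n,
            (if i ≤ m then lam ^ 2 * (i:ℝ) ^ p else (i:ℝ) ^ (-q)) := by
      rw [Finset.mul_sum]
      apply Finset.sum_le_sum
      intro i hi
      have hi1 : 1 ≤ i := (Finset.mem_Icc.1 hi).1
      have hi0 : (0:ℝ) < (i:ℝ) := by exact_mod_cast hi1
      have hx0 : 0 ≤ lam * (i:ℝ) ^ (2*β) := by positivity
      by_cases him : i ≤ m
      · simp only [him, if_true]
        have hD1 : (1:ℝ) ≤ (1 + lam * (i:ℝ) ^ (2*β)) ^ 2 := by nlinarith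
        have := div_le_self (Real.rpow_nonneg hi0.le (4*β-2*δ)) hD1
        calc lam ^ 2 * ((i:ℝ) ^ (4*β-2*δ) / (1 + lam * (i:ℝ) ^ (2*β)) ^ 2)
            ≤ lam ^ 2 * (i:ℝ) ^ (4*β-2*δ) := by
              apply mul_le_mul_of_nonneg_left this (by positivity)
          _ = lam ^ 2 * (i:ℝ) ^ p := by rw [hpdef]
      · simp only [him, if_false]
        have hxpos : (0:ℝ) < (lam * (i:ℝ) ^ (2*β)) ^ 2 := by positivity
        have hD : (lam * (i:ℝ) ^ (2*β)) ^ 2 ≤ (1 + lam * (i:ℝ) ^ (2*β)) ^ 2 := by nlinarith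
        have h1 : lam ^ 2 * ((i:ℝ) ^ (4*β-2*δ) / (1 + lam * (i:ℝ) ^ (2*β)) ^ 2)
            ≤ lam ^ 2 * ((i:ℝ) ^ (4*β-2*δ) / (lam * (i:ℝ) ^ (2*β)) ^ 2) := by
          apply mul_le_mul_of_nonneg_left ?_ (by positivity)
          exact div_le_div_of_nonneg_left (Real.rpow_nonneg hi0.le _) hxpos hD
        have h2 : lam ^ 2 * ((i:ℝ) ^ (4*β-2*δ) / (lam * (i:ℝ) ^ (2*β)) ^ 2)
            = (i:ℝ) ^ (-q) := by
          have hib : (0:ℝ) < (i:ℝ) ^ (2*β) := Real.rpow_pos_of_pos hi0 _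
          have e1 : ((i:ℝ) ^ (2*β)) ^ 2 = (i:ℝ) ^ (4*β) := by
            rw [sq, ← Real.rpow_add hi0]; ring_nf
          rw [mul_pow, e1]
          rw [show lam ^ 2 * ((i:ℝ) ^ (4*β-2*δ) / (lam ^ 2 * (i:ℝ) ^ (4*β)))
              = (i:ℝ) ^ (4*β-2*δ) / (i:ℝ) ^ (4*β) by
            field_simp]
          rw [← Real.rpow_sub hi0,
            show (4*β-2*δ) - (4*β) = -q from by rw [hqdef]; ring]
        linarith
    -- step 2: split the if-sum
    have step2 : ∑ i ∈ Finset.Icc 1 n,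
            (if i ≤ m then lam ^ 2 * (i:ℝ) ^ p else (i:ℝ) ^ (-q))
        = (∑ i ∈ (Finset.Icc 1 n).filter (fun i => i ≤ m), lam ^ 2 * (i:ℝ) ^ p)
          + ∑ i ∈ (Finset.Icc 1 n).filter (fun i => ¬ i ≤ m), (i:ℝ) ^ (-q) :=
      Finset.sum_ite _ _
    -- head bound
    have head : (∑ i ∈ (Finset.Icc 1 n).filter (fun i => i ≤ m), lam ^ 2 * (i:ℝ) ^ p)
        ≤ (1 + 1/(p+1)) * lam ^ r := by
      have hsub : (Finset.Icc 1 n).filter (fun i => i ≤ m) ⊆ Finset.Icc 1 m := by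
        intro i hi
        simp only [Finset.mem_filter, Finset.mem_Icc] at hi ⊢
        exact ⟨hi.1.1, hi.2⟩
      have h1 : (∑ i ∈ (Finset.Icc 1 n).filter (fun i => i ≤ m), lam ^ 2 * (i:ℝ) ^ p)
          ≤ ∑ i ∈ Finset.Icc 1 m, lam ^ 2 * (i:ℝ) ^ p := by
        apply Finset.sum_le_sum_of_subset_of_nonneg hsub
        intro i _ _
        positivity
      have h2 : ∑ i ∈ Finset.Icc 1 m, lam ^ 2 * (i:ℝ) ^ p
          = lam ^ 2 * ∑ i ∈ Finset.Icc 1 m, (i:ℝ) ^ p := by rw [Finset.mul_sum]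
      have h3 := sumA13 p hp m hm1
      have h4 : (m:ℝ) ^ (p+1) ≤ T ^ (p+1) :=
        Real.rpow_le_rpow (by positivity) hmT (by linarith)
      have h5 : lam ^ 2 * T ^ (p+1) = lam ^ r := by
        rw [hTdef, ← Real.rpow_natCast lam 2, ← Real.rpow_mul hlam.le,
          ← Real.rpow_add hlam, hrdef]
        congr 1
        field_simp
        rw [hpdef]; ring
      have hcoef : (0:ℝ) < 1 + 1/(p+1) := by
        have := div_pos one_pos (show (0:ℝ) < p + 1 by linarith)
        linarith
      calc (∑ i ∈ (Finset.Icc 1 n).filter (fun i => i ≤ m), lam ^ 2 * (i:ℝ) ^ p)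
          ≤ lam ^ 2 * ∑ i ∈ Finset.Icc 1 m, (i:ℝ) ^ p := by rw [← h2]; exact h1
        _ ≤ lam ^ 2 * ((1 + 1/(p+1)) * (m:ℝ) ^ (p+1)) := by
            apply mul_le_mul_of_nonneg_left h3 (by positivity)
        _ ≤ lam ^ 2 * ((1 + 1/(p+1)) * T ^ (p+1)) := by
            apply mul_le_mul_of_nonneg_left ?_ (by positivity)
            exact mul_le_mul_of_nonneg_left h4 hcoef.le
        _ = (1 + 1/(p+1)) * (lam ^ 2 * T ^ (p+1)) := by ring
        _ = (1 + 1/(p+1)) * lam ^ r := by rw [h5]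
    -- tail bound
    have tail : (∑ i ∈ (Finset.Icc 1 n).filter (fun i => ¬ i ≤ m), (i:ℝ) ^ (-q))
        ≤ ((2:ℝ)^(q-1)/(q-1)) * lam ^ r := by
      have hsub : (Finset.Icc 1 n).filter (fun i => ¬ i ≤ m) ⊆ Finset.Icc (m+1) n := by
        intro i hi
        simp only [Finset.mem_filter, Finset.mem_Icc, not_le] at hi ⊢
        exact ⟨hi.2, hi.1.2⟩
      have h1 : (∑ i ∈ (Finset.Icc 1 n).filter (fun i => ¬ i ≤ m), (i:ℝ) ^ (-q))
          ≤ ∑ i ∈ Finset.Icc (m+1) n, (i:ℝ) ^ (-q) := by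
        apply Finset.sum_le_sum_of_subset_of_nonneg hsub
        intro i hi _
        have : 0 < i := by
          have := (Finset.mem_Icc.1 hi).1; omega
        have hi0 : (0:ℝ) < (i:ℝ) := by exact_mod_cast this
        positivity
      have h2 := sumB13 q hq m n hm1
      have hT2m : T / 2 ≤ (m:ℝ) := by linarith
      have h3 : (m:ℝ) ^ (1-q) ≤ (T/2) ^ (1-q) :=
        Real.rpow_le_rpow_of_nonpos (by linarith) hT2m (by linarith)
      have h4 : (T/2) ^ (1-q) = T ^ (1-q) * (2:ℝ) ^ (q-1) := by
        rw [Real.div_rpow hT0.le (by norm_num), show (1-q) = -(q-1) by ring,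
          Real.rpow_neg (by norm_num : (0:ℝ) ≤ 2), div_eq_mul_inv, inv_inv]
      have h5 : T ^ (1-q) = lam ^ r := by
        rw [hTdef, ← Real.rpow_mul hlam.le, hrdef]
        congr 1
        field_simp
        rw [hqdef]; ring
      have hq1 : (0:ℝ) < q - 1 := by linarith
      calc (∑ i ∈ (Finset.Icc 1 n).filter (fun i => ¬ i ≤ m), (i:ℝ) ^ (-q))
          ≤ ∑ i ∈ Finset.Icc (m+1) n, (i:ℝ) ^ (-q) := h1
        _ ≤ (m:ℝ) ^ (1-q) / (q-1) := h2
        _ ≤ (T/2) ^ (1-q) / (q-1) := (div_le_div_iff_of_pos_right hq1).2 h3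
        _ = ((2:ℝ)^(q-1)/(q-1)) * lam ^ r := by rw [h4, h5]; ring
    calc lam ^ 2 * ∑ i ∈ Finset.Icc 1 n,
          (i : ℝ) ^ (4 * β - 2 * δ) / (1 + lam * (i : ℝ) ^ (2 * β)) ^ 2
        ≤ _ := step1
      _ = _ := step2
      _ ≤ (1 + 1/(p+1)) * lam ^ r + ((2:ℝ)^(q-1)/(q-1)) * lam ^ r := add_le_add head tail
      _ = ((1 + 1/(p+1)) + (2:ℝ)^(q-1)/(q-1)) * lam ^ r := by ring
  intro n hn lam hlam hlam1
  refine ⟨key n hn lam hlam hlam1, ?_⟩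
  calc (n:ℝ) * lam ^ 2 * ∑ i ∈ Finset.Icc 1 n,
          (i : ℝ) ^ (4 * β - 2 * δ) / (1 + lam * (i : ℝ) ^ (2 * β)) ^ 2
      = (n:ℝ) * (lam ^ 2 * ∑ i ∈ Finset.Icc 1 n,
          (i : ℝ) ^ (4 * β - 2 * δ) / (1 + lam * (i : ℝ) ^ (2 * β)) ^ 2) := by ring
    _ ≤ (n:ℝ) * (((1 + 1/(p+1)) + (2:ℝ)^(q-1)/(q-1)) * lam ^ r) :=
        mul_le_mul_of_nonneg_left (key n hn lam hlam hlam1) (Nat.cast_nonneg n)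
    _ = ((1 + 1/(p+1)) + (2:ℝ)^(q-1)/(q-1)) * ((n:ℝ) * lam ^ r) := by ring
end

section
/- Let ρ > 0 and κ satisfy 0 < κ < 2ρ. Then there exists a constant C (depending only on ρ and κ) such that for all n ≥ 1 and all λ > 0, λ² Σ_{i=1}^n e^{(2ρ−κ)i}/(1 + λ e^{ρi})² ≤ C · λ^{κ/ρ}. Consequently, for kernel eigenvalues n μ_i with μ_i = e^{−ρi} and signal components of squared magnitude n ν_i with ν_i = e^{−κi}, the bias term nλ² Σ_{i=1}^n ν_i/(μ_i + λ)² is O(n λ^{κ/ρ}). -/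
private lemma aux_geom (c : ℝ) (hc : 0 < c) (S : Finset ℕ) (σ : ℕ → ℕ)
    (hσ : Set.InjOn σ S) (f : ℕ → ℝ)
    (hf : ∀ i ∈ S, f i ≤ Real.exp (-c) ^ (σ i)) :
    ∑ i ∈ S, f i ≤ (1 - Real.exp (-c))⁻¹ := by
  have hr0 : (0:ℝ) ≤ Real.exp (-c) := (Real.exp_pos _).le
  have hr1 : Real.exp (-c) < 1 := by
    rw [Real.exp_lt_one_iff]; linarith
  calc ∑ i ∈ S, f i ≤ ∑ i ∈ S, Real.exp (-c) ^ (σ i) := Finset.sum_le_sum hf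
    _ = ∑ k ∈ S.image σ, Real.exp (-c) ^ k := by
        rw [Finset.sum_image (fun x hx y hy h => hσ hx hy h)]
    _ ≤ ∑' k : ℕ, Real.exp (-c) ^ k :=
        Summable.sum_le_tsum _ (fun k _ => pow_nonneg hr0 k)
          (summable_geometric_of_lt_one hr0 hr1)
    _ = (1 - Real.exp (-c))⁻¹ := tsum_geometric_of_lt_one hr0 hr1

private lemma exp_pow_eq (c : ℝ) (k : ℕ) : Real.exp (-c) ^ k = Real.exp (-c * k) := by
  rw [← Real.exp_nat_mul]; ring_nf

private lemma min_geom_sum (c₁ c₂ t : ℝ) (h₁ : 0 < c₁) (h₂ : 0 < c₂) (S : Finset ℕ) :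
    ∑ i ∈ S, min (Real.exp (c₁ * ((i:ℝ) - t))) (Real.exp (-c₂ * ((i:ℝ) - t)))
      ≤ (1 - Real.exp (-c₁))⁻¹ + (1 - Real.exp (-c₂))⁻¹ := by
  set T : ℤ := ⌊t⌋ with hT
  rw [← Finset.sum_filter_add_sum_filter_not S (fun i => (i:ℝ) ≤ t)]
  apply add_le_add
  · apply aux_geom c₁ h₁ _ (fun i => (T - (i:ℤ)).toNat)
    · intro i hi j hj h
      simp only [Finset.coe_filter, Set.mem_setOf_eq, Finset.mem_filter] at hi hj
      have hi' : (i:ℤ) ≤ T := Int.le_floor.mpr (by exact_mod_cast hi.2)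
      have hj' : (j:ℤ) ≤ T := Int.le_floor.mpr (by exact_mod_cast hj.2)
      have := congrArg (fun k : ℕ => (k : ℤ)) h
      simp only [Int.toNat_of_nonneg (by omega : (0:ℤ) ≤ T - (i:ℤ)),
        Int.toNat_of_nonneg (by omega : (0:ℤ) ≤ T - (j:ℤ))] at this
      omega
    · intro i hi
      rw [Finset.mem_filter] at hi
      have hit : (i:ℝ) ≤ t := hi.2
      have hiT : (i:ℤ) ≤ T := Int.le_floor.mpr (by exact_mod_cast hit)
      refine (min_le_left _ _).trans ?_
      rw [exp_pow_eq]
      apply Real.exp_le_exp.mpr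
      have h0 : ((T - (i:ℤ)).toNat : ℤ) = T - (i:ℤ) := Int.toNat_of_nonneg (by omega)
      have hcast : (((T - (i:ℤ)).toNat : ℕ) : ℝ) = (T:ℝ) - (i:ℝ) := by
        exact_mod_cast congrArg (fun z : ℤ => (z:ℝ)) h0
      rw [hcast]
      have hTt : (T:ℝ) ≤ t := Int.floor_le t
      nlinarith
  · apply aux_geom c₂ h₂ _ (fun i => ((i:ℤ) - T - 1).toNat)
    · intro i hi j hj h
      simp only [Finset.coe_filter, Set.mem_setOf_eq, Finset.mem_filter] at hi hj
      have hi' : T < (i:ℤ) := Int.floor_lt.mpr (by push_cast; linarith [not_le.mp hi.2])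
      have hj' : T < (j:ℤ) := Int.floor_lt.mpr (by push_cast; linarith [not_le.mp hj.2])
      have := congrArg (fun k : ℕ => (k : ℤ)) h
      simp only [Int.toNat_of_nonneg (by omega : (0:ℤ) ≤ (i:ℤ) - T - 1),
        Int.toNat_of_nonneg (by omega : (0:ℤ) ≤ (j:ℤ) - T - 1)] at this
      omega
    · intro i hi
      rw [Finset.mem_filter] at hi
      have hit : t < (i:ℝ) := not_le.mp hi.2
      have hiT : T < (i:ℤ) := Int.floor_lt.mpr (by push_cast; linarith)
      refine (min_le_right _ _).trans ?_
      rw [exp_pow_eq]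
      apply Real.exp_le_exp.mpr
      have h0 : (((i:ℤ) - T - 1).toNat : ℤ) = (i:ℤ) - T - 1 := Int.toNat_of_nonneg (by omega)
      have hcast : ((((i:ℤ) - T - 1).toNat : ℕ) : ℝ) = (i:ℝ) - (T:ℝ) - 1 := by
        exact_mod_cast congrArg (fun z : ℤ => (z:ℝ)) h0
      rw [hcast]
      have hTt : t < (T:ℝ) + 1 := Int.lt_floor_add_one t
      nlinarith




/-- in the regime `0 < κ < 2ρ`, there is a constant `C` such that for all
`n ≥ 1` and `λ > 0`, `λ² Σ_{i=1}^n e^{(2ρ−κ)i}/(1 + λ e^{ρi})² ≤ C λ^{κ/ρ}`; hence for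
eigenvalues `n e^{−ρi}` and signal `n e^{−κi}` the bias term
`nλ² Σ_{i=1}^n e^{−κi}/(e^{−ρi} + λ)²` is `O(n λ^{κ/ρ})`. -/
theorem stmt14 (ρ κ : ℝ) (hρ : 0 < ρ) (hκ : 0 < κ) (hκρ : κ < 2 * ρ) :
    ∃ C : ℝ, ∀ n : ℕ, 1 ≤ n → ∀ lam : ℝ, 0 < lam →
      (lam ^ 2 * ∑ i ∈ Finset.Icc 1 n,
          Real.exp ((2 * ρ - κ) * (i : ℝ)) / (1 + lam * Real.exp (ρ * (i : ℝ))) ^ 2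
        ≤ C * lam ^ (κ / ρ))
      ∧ (n : ℝ) * lam ^ 2 * ∑ i ∈ Finset.Icc 1 n,
          Real.exp (-κ * (i : ℝ)) / (Real.exp (-ρ * (i : ℝ)) + lam) ^ 2
        ≤ C * ((n : ℝ) * lam ^ (κ / ρ)) := by
  refine ⟨(1 - Real.exp (-(2 * ρ - κ)))⁻¹ + (1 - Real.exp (-κ))⁻¹, ?_⟩
  intro n hn lam hlam
  set t : ℝ := -Real.log lam / ρ with ht
  have hρ' : ρ ≠ 0 := hρ.ne'
  have hrpow_pos : (0:ℝ) < lam ^ (κ / ρ) := Real.rpow_pos_of_pos hlam _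
  -- first inequality
  have main : lam ^ 2 * ∑ i ∈ Finset.Icc 1 n,
      Real.exp ((2 * ρ - κ) * (i : ℝ)) / (1 + lam * Real.exp (ρ * (i : ℝ))) ^ 2
      ≤ ((1 - Real.exp (-(2 * ρ - κ)))⁻¹ + (1 - Real.exp (-κ))⁻¹) * lam ^ (κ / ρ) := by
    have hterm : ∀ i ∈ Finset.Icc 1 n,
        lam ^ 2 * (Real.exp ((2 * ρ - κ) * (i : ℝ)) / (1 + lam * Real.exp (ρ * (i : ℝ))) ^ 2)
        ≤ lam ^ (κ / ρ) *
          min (Real.exp ((2 * ρ - κ) * ((i:ℝ) - t))) (Real.exp (-κ * ((i:ℝ) - t))) := by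
      intro i _
      set x : ℝ := (i : ℝ)
      have hE : (0:ℝ) < Real.exp (ρ * x) := Real.exp_pos _
      have hD : (1:ℝ) ≤ 1 + lam * Real.exp (ρ * x) := by nlinarith
      have hD0 : (0:ℝ) < 1 + lam * Real.exp (ρ * x) := by linarith
      -- identity 1
      have e1 : lam ^ (κ / ρ) * Real.exp ((2 * ρ - κ) * (x - t))
          = lam ^ 2 * Real.exp ((2 * ρ - κ) * x) := by
        have h1 : (2 * ρ - κ) * (x - t) = (2 * ρ - κ) * x + Real.log lam * ((2 * ρ - κ) / ρ) := by
          rw [ht]; field_simp; ring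
        have h2 : lam ^ (κ / ρ) * lam ^ ((2 * ρ - κ) / ρ) = lam ^ 2 := by
          rw [← Real.rpow_add hlam]
          have h3 : κ / ρ + (2 * ρ - κ) / ρ = ((2:ℕ):ℝ) := by
            push_cast
            field_simp
            ring
          rw [h3, Real.rpow_natCast]
        calc lam ^ (κ / ρ) * Real.exp ((2 * ρ - κ) * (x - t))
            = lam ^ (κ / ρ) * lam ^ ((2 * ρ - κ) / ρ) * Real.exp ((2 * ρ - κ) * x) := by
              rw [h1, Real.exp_add, ← Real.rpow_def_of_pos hlam]; ring
          _ = lam ^ 2 * Real.exp ((2 * ρ - κ) * x) := by rw [h2]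
      -- identity 2
      have e2 : lam ^ (κ / ρ) * Real.exp (-κ * (x - t)) = Real.exp (-κ * x) := by
        have h1 : -κ * (x - t) = -κ * x + Real.log lam * (-(κ / ρ)) := by
          rw [ht]; field_simp; ring
        have h2 : lam ^ (κ / ρ) * lam ^ (-(κ / ρ)) = 1 := by
          rw [← Real.rpow_add hlam]; norm_num
        calc lam ^ (κ / ρ) * Real.exp (-κ * (x - t))
            = lam ^ (κ / ρ) * lam ^ (-(κ / ρ)) * Real.exp (-κ * x) := by
              rw [h1, Real.exp_add, ← Real.rpow_def_of_pos hlam]; ring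
          _ = Real.exp (-κ * x) := by rw [h2]; ring
      rw [mul_min_of_nonneg _ _ hrpow_pos.le]
      apply le_min
      · rw [e1]
        apply mul_le_mul_of_nonneg_left _ (by positivity)
        exact div_le_self (Real.exp_pos _).le (by nlinarith)
      · rw [e2, ← mul_div_assoc, div_le_iff₀ (by positivity)]
        have hA : Real.exp ((2 * ρ - κ) * x) = Real.exp (ρ*x)^2 * Real.exp (-κ*x) := by
          rw [pow_two, ← Real.exp_add, ← Real.exp_add]; ring_nf
        rw [hA]
        have h3 : (lam * Real.exp (ρ*x))^2 ≤ (1 + lam * Real.exp (ρ*x))^2 := by nlinarith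
        have h4 : (0:ℝ) < Real.exp (-κ*x) := Real.exp_pos _
        nlinarith
    calc lam ^ 2 * ∑ i ∈ Finset.Icc 1 n,
        Real.exp ((2 * ρ - κ) * (i : ℝ)) / (1 + lam * Real.exp (ρ * (i : ℝ))) ^ 2
        = ∑ i ∈ Finset.Icc 1 n,
          lam ^ 2 * (Real.exp ((2 * ρ - κ) * (i : ℝ)) / (1 + lam * Real.exp (ρ * (i : ℝ))) ^ 2) := by
          rw [Finset.mul_sum]
      _ ≤ ∑ i ∈ Finset.Icc 1 n, lam ^ (κ / ρ) *
          min (Real.exp ((2 * ρ - κ) * ((i:ℝ) - t))) (Real.exp (-κ * ((i:ℝ) - t))) :=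
          Finset.sum_le_sum hterm
      _ = lam ^ (κ / ρ) * ∑ i ∈ Finset.Icc 1 n,
          min (Real.exp ((2 * ρ - κ) * ((i:ℝ) - t))) (Real.exp (-κ * ((i:ℝ) - t))) := by
          rw [Finset.mul_sum]
      _ ≤ lam ^ (κ / ρ) * ((1 - Real.exp (-(2 * ρ - κ)))⁻¹ + (1 - Real.exp (-κ))⁻¹) := by
          apply mul_le_mul_of_nonneg_left _ hrpow_pos.le
          exact min_geom_sum (2 * ρ - κ) κ t (by linarith) hκ _
      _ = ((1 - Real.exp (-(2 * ρ - κ)))⁻¹ + (1 - Real.exp (-κ))⁻¹) * lam ^ (κ / ρ) := by ring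
  refine ⟨main, ?_⟩
  -- second sum equals first sum
  have hsum : ∑ i ∈ Finset.Icc 1 n,
      Real.exp (-κ * (i : ℝ)) / (Real.exp (-ρ * (i : ℝ)) + lam) ^ 2
      = ∑ i ∈ Finset.Icc 1 n,
      Real.exp ((2 * ρ - κ) * (i : ℝ)) / (1 + lam * Real.exp (ρ * (i : ℝ))) ^ 2 := by
    apply Finset.sum_congr rfl
    intro i _
    set x : ℝ := (i : ℝ)
    have hE : Real.exp (ρ * x) ≠ 0 := (Real.exp_pos _).ne'
    have h1 : Real.exp (-ρ * x) = (Real.exp (ρ * x))⁻¹ := by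
      rw [← Real.exp_neg]; ring_nf
    have h2 : Real.exp ((2 * ρ - κ) * x) = Real.exp (ρ * x) ^ 2 * Real.exp (-κ * x) := by
      rw [pow_two, ← Real.exp_add, ← Real.exp_add]; ring_nf
    have hD : (0:ℝ) < (Real.exp (ρ * x))⁻¹ + lam := by positivity
    have hD2 : (0:ℝ) < 1 + lam * Real.exp (ρ * x) := by positivity
    rw [h1, h2, div_eq_div_iff (by positivity) (by positivity)]
    field_simp
  rw [hsum, mul_assoc]
  calc (n : ℝ) * (lam ^ 2 * ∑ i ∈ Finset.Icc 1 n,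
      Real.exp ((2 * ρ - κ) * (i : ℝ)) / (1 + lam * Real.exp (ρ * (i : ℝ))) ^ 2)
      ≤ (n : ℝ) * (((1 - Real.exp (-(2 * ρ - κ)))⁻¹ + (1 - Real.exp (-κ))⁻¹) * lam ^ (κ / ρ)) :=
        mul_le_mul_of_nonneg_left main (Nat.cast_nonneg n)
    _ = ((1 - Real.exp (-(2 * ρ - κ)))⁻¹ + (1 - Real.exp (-κ))⁻¹) * ((n : ℝ) * lam ^ (κ / ρ)) := by
        ring
end

section
/- Let ρ > 0 and δ > 1/2. Then there exists a constant C (depending only on ρ and δ) such that for all λ with 0 < λ ≤ e^{−ρ} and all n ≥ 1, λ² Σ_{i=1}^n i^{−2δ}/(e^{−ρi} + λ)² ≤ C · (log(1/λ))^{1−2δ}. Consequently, for kernel eigenvalues n μ_i with μ_i = e^{−ρi} and signal components of squared magnitude n ν_i with ν_i = i^{−2δ}, the bias term nλ² Σ_{i=1}^n ν_i/(μ_i + λ)² is O( n (log(1/λ))^{1−2δ} ). -/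
open Finset

lemma aux_pow_exp (s x : ℝ) (hs : 0 ≤ s) (hx : 0 < x) :
    x ^ s * Real.exp (-x) ≤ (Nat.ceil s).factorial := by
  have hfac : (1:ℝ) ≤ ((Nat.ceil s).factorial : ℝ) := by
    exact_mod_cast Nat.one_le_iff_ne_zero.mpr (Nat.factorial_pos _).ne'
  rcases le_or_gt x 1 with h1 | h1
  · have h2 : x ^ s ≤ 1 := Real.rpow_le_one hx.le h1 hs
    have h3 : Real.exp (-x) ≤ 1 := Real.exp_le_one_iff.mpr (by linarith)
    have h4 : (0:ℝ) < Real.exp (-x) := Real.exp_pos _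
    nlinarith [Real.rpow_nonneg hx.le s]
  · have h2 : x ^ s ≤ x ^ ((Nat.ceil s : ℕ) : ℝ) :=
      Real.rpow_le_rpow_of_exponent_le h1.le (Nat.le_ceil s)
    rw [Real.rpow_natCast] at h2
    have h3 : x ^ (Nat.ceil s) / ((Nat.ceil s).factorial : ℝ) ≤ Real.exp x := by
      calc x ^ (Nat.ceil s) / ((Nat.ceil s).factorial : ℝ)
          ≤ ∑ i ∈ Finset.range (Nat.ceil s + 1), x ^ i / (i.factorial : ℝ) := by
            apply Finset.single_le_sum (f := fun i => x ^ i / (i.factorial : ℝ))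
              (fun i _ => by positivity) (Finset.self_mem_range_succ _)
        _ ≤ Real.exp x := Real.sum_le_exp_of_nonneg (by linarith) _
    have h5 : (0:ℝ) < Real.exp x := Real.exp_pos x
    have h6 : x ^ (Nat.ceil s) ≤ ((Nat.ceil s).factorial : ℝ) * Real.exp x := by
      rw [div_le_iff₀ (by positivity)] at h3
      linarith [h3]
    have h7 : Real.exp x * Real.exp (-x) = 1 := by
      rw [← Real.exp_add]; simp
    have h8 : (0:ℝ) < Real.exp (-x) := Real.exp_pos _
    calc x ^ s * Real.exp (-x) ≤ x ^ (Nat.ceil s) * Real.exp (-x) := by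
          exact mul_le_mul_of_nonneg_right h2 h8.le
      _ ≤ (((Nat.ceil s).factorial : ℝ) * Real.exp x) * Real.exp (-x) := by
          exact mul_le_mul_of_nonneg_right h6 h8.le
      _ = ((Nat.ceil s).factorial : ℝ) * (Real.exp x * Real.exp (-x)) := by ring
      _ = ((Nat.ceil s).factorial : ℝ) := by rw [h7, mul_one]

lemma aux_telescope (δ : ℝ) (hδ : 1/2 < δ) (j : ℕ) (hj : 1 ≤ j) :
    ((j:ℝ)+1) ^ (-(2*δ)) ≤ ((j:ℝ) ^ (-(2*δ-1)) - ((j:ℝ)+1) ^ (-(2*δ-1))) / (2*δ-1) := by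
  set x : ℝ := (j:ℝ) with hxdef
  have hx : (1:ℝ) ≤ x := by rw [hxdef]; exact_mod_cast hj
  have hx0 : (0:ℝ) < x := by linarith
  have hx1 : (0:ℝ) < x + 1 := by linarith
  have hA : (0:ℝ) < x ^ (2*δ) := Real.rpow_pos_of_pos hx0 _
  have hB : (0:ℝ) < (x+1) ^ (2*δ) := Real.rpow_pos_of_pos hx1 _
  -- Bernoulli
  have hbern : 1 + (2*δ) * (1/x) ≤ (1 + 1/x) ^ (2*δ) :=
    one_add_mul_self_le_rpow_one_add (le_trans (by norm_num) (by positivity : (0:ℝ) ≤ 1/x)) (by linarith)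
  have e0 : (1:ℝ) + 1/x = (x+1)/x := by field_simp
  rw [e0, Real.div_rpow hx1.le hx0.le] at hbern
  -- key : (x + 2δ) * x^{2δ}⁻¹-free form
  have key : (x + 2*δ) * x ^ (2*δ) ≤ ((x+1) ^ (2*δ)) * x := by
    have e1 : 1 + (2*δ) * (1/x) = (x + 2*δ)/x := by field_simp
    rw [e1, div_le_div_iff₀ hx0 hA] at hbern
    linarith [hbern]
  have k3 : (x + 2*δ) / ((x+1) ^ (2*δ)) ≤ x / (x ^ (2*δ)) := by
    rw [div_le_div_iff₀ hB hA]
    nlinarith [key]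
  have e1 : x ^ (-(2*δ-1)) = x / x ^ (2*δ) := by
    rw [show -(2*δ-1) = 1 - 2*δ by ring, Real.rpow_sub hx0, Real.rpow_one]
  have e2 : (x+1) ^ (-(2*δ-1)) = (x+1) / (x+1) ^ (2*δ) := by
    rw [show -(2*δ-1) = 1 - 2*δ by ring, Real.rpow_sub hx1, Real.rpow_one]
  have e3 : (x+1) ^ (-(2*δ)) = 1 / (x+1) ^ (2*δ) := by
    rw [show -(2*δ) = 0 - 2*δ by ring, Real.rpow_sub hx1, Real.rpow_zero]
  rw [e1, e2, e3, le_div_iff₀ (by linarith : (0:ℝ) < 2*δ-1)]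
  have comb : x / (x ^ (2*δ)) - (x+1) / ((x+1) ^ (2*δ)) - 1 / ((x+1) ^ (2*δ)) * (2*δ-1)
      = x / (x ^ (2*δ)) - (x + 2*δ) / ((x+1) ^ (2*δ)) := by ring
  linarith [k3, comb]

lemma aux_tail (δ : ℝ) (hδ : 1/2 < δ) (m : ℕ) (hm : 1 ≤ m) :
    ∀ n : ℕ, ∑ i ∈ Finset.Icc (m+1) n, (i:ℝ) ^ (-(2*δ))
      ≤ ((m:ℝ) ^ (-(2*δ-1)) - ((max m n : ℕ):ℝ) ^ (-(2*δ-1))) / (2*δ-1) := by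
  intro n
  induction n with
  | zero =>
      rw [Finset.Icc_eq_empty (by omega), Finset.sum_empty]
      simp [Nat.max_eq_left (Nat.zero_le m)]
  | succ n ih =>
      rcases le_or_gt (n+1) m with h | h
      · rw [Finset.Icc_eq_empty (by omega), Finset.sum_empty]
        rw [max_eq_left h]
        simp
      · have hmn : m ≤ n := by omega
        rw [Finset.sum_Icc_succ_top (by omega : m+1 ≤ n+1)]
        have h1 : 1 ≤ n := le_trans hm hmn
        have htel := aux_telescope δ hδ n h1
        rw [max_eq_right hmn] at ih
        rw [max_eq_right (by omega : m ≤ n+1)]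
        have hcast : ((n+1 : ℕ) : ℝ) = (n:ℝ) + 1 := by push_cast; ring
        rw [hcast]
        have comb : ((m:ℝ) ^ (-(2*δ-1)) - ((n:ℝ)+1) ^ (-(2*δ-1))) / (2*δ-1)
            = ((m:ℝ) ^ (-(2*δ-1)) - (n:ℝ) ^ (-(2*δ-1))) / (2*δ-1)
              + ((n:ℝ) ^ (-(2*δ-1)) - ((n:ℝ)+1) ^ (-(2*δ-1))) / (2*δ-1) := by ring
        linarith [ih, htel]

set_option maxHeartbeats 1000000 in
/-- mixed decay: `μ_i = e^{−ρi}` (`ρ > 0`) and `ν_i = i^{−2δ}` (`δ > 1/2`).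
There is a constant `C` such that for all `0 < λ ≤ e^{−ρ}` and all `n ≥ 1`,
`λ² Σ_{i=1}^n i^{−2δ}/(e^{−ρi} + λ)² ≤ C (log(1/λ))^{1−2δ}`; hence the bias term
`nλ² Σ …` is `O(n (log(1/λ))^{1−2δ})`. -/
theorem stmt15 (ρ δ : ℝ) (hρ : 0 < ρ) (hδ : 1 / 2 < δ) :
    ∃ C : ℝ, ∀ lam : ℝ, 0 < lam → lam ≤ Real.exp (-ρ) → ∀ n : ℕ, 1 ≤ n →
      (lam ^ 2 * ∑ i ∈ Finset.Icc 1 n,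
          (i : ℝ) ^ (-(2 * δ)) / (Real.exp (-ρ * (i : ℝ)) + lam) ^ 2
        ≤ C * Real.log (1 / lam) ^ (1 - 2 * δ))
      ∧ (n : ℝ) * lam ^ 2 * ∑ i ∈ Finset.Icc 1 n,
          (i : ℝ) ^ (-(2 * δ)) / (Real.exp (-ρ * (i : ℝ)) + lam) ^ 2
        ≤ C * ((n : ℝ) * Real.log (1 / lam) ^ (1 - 2 * δ)) := by
  have hδ1 : (1:ℝ) ≤ 2*δ := by linarith
  have hδ0 : (0:ℝ) ≤ 2*δ := by linarith
  have ha : (0:ℝ) < 2*δ - 1 := by linarith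
  set K1 : ℝ := ((Nat.ceil (2*δ)).factorial : ℝ) with hK1
  have hK1pos : (0:ℝ) < K1 := by
    rw [hK1]; exact_mod_cast Nat.factorial_pos _
  set r : ℝ := Real.exp (-ρ) with hr
  have hr0 : (0:ℝ) < r := Real.exp_pos _
  have hr1 : r < 1 := by
    rw [hr, Real.exp_lt_one_iff]; linarith
  set C2 : ℝ := K1 * Real.exp ρ / ρ ^ (2*δ) with hC2
  have hρ2δ : (0:ℝ) < ρ ^ (2*δ) := Real.rpow_pos_of_pos hρ _
  have hC2pos : (0:ℝ) < C2 := by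
    rw [hC2]; positivity
  refine ⟨(C2 / (1-r) + 1/(2*δ-1)) * (2*ρ) ^ (2*δ-1), fun lam hlam hlam2 n hn => ?_⟩
  set C : ℝ := (C2 / (1-r) + 1/(2*δ-1)) * (2*ρ) ^ (2*δ-1) with hC
  set L : ℝ := Real.log (1/lam) with hL
  have hLe : L = -Real.log lam := by rw [hL, one_div, Real.log_inv]
  have hLρ : ρ ≤ L := by
    have h1 : Real.log lam ≤ Real.log (Real.exp (-ρ)) := Real.log_le_log hlam hlam2
    rw [Real.log_exp] at h1
    rw [hLe]; linarith
  have hL0 : (0:ℝ) < L := lt_of_lt_of_le hρ hLρ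
  set m : ℕ := Nat.floor (L/ρ) with hm
  have hm1 : 1 ≤ m := by
    apply Nat.le_floor
    rw [Nat.cast_one, le_div_iff₀ hρ]; linarith
  have hm1R : (1:ℝ) ≤ (m:ℝ) := by exact_mod_cast hm1
  have hmL : (m:ℝ) ≤ L / ρ := Nat.floor_le (by positivity)
  have hmρL : ρ * (m:ℝ) ≤ L := by
    rw [mul_comm, ← le_div_iff₀ hρ]; exact hmL
  have hlam_m : lam ≤ Real.exp (-(ρ * (m:ℝ))) := by
    have h1 : Real.log lam ≤ -(ρ * (m:ℝ)) := by rw [hLe] at hmρL; linarith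
    calc lam = Real.exp (Real.log lam) := (Real.exp_log hlam).symm
      _ ≤ _ := Real.exp_le_exp.mpr h1
  have hmhalf : L/(2*ρ) ≤ (m:ℝ) := by
    have e0 : L/(2*ρ) = (L/ρ)/2 := by
      rw [div_div]; ring_nf
    rcases le_or_gt (L/ρ) 2 with h | h
    · have h1 : L/(2*ρ) ≤ 1 := by rw [e0]; linarith
      linarith
    · have h2 := Nat.sub_one_lt_floor (L/ρ)
      rw [← hm] at h2
      rw [e0]; linarith
  -- the pointwise bound function
  set g : ℕ → ℝ := fun i => if i ≤ m then C2 * (m:ℝ) ^ (-(2*δ)) * r ^ (m-i) else (i:ℝ) ^ (-(2*δ)) with hg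
  have hpoint : ∀ i ∈ Finset.Icc 1 n,
      lam ^ 2 * ((i:ℝ) ^ (-(2*δ)) / (Real.exp (-ρ * (i:ℝ)) + lam) ^ 2) ≤ g i := by
    intro i hi
    obtain ⟨hi1, hin⟩ := Finset.mem_Icc.mp hi
    have hiR : (1:ℝ) ≤ (i:ℝ) := by exact_mod_cast hi1
    have hi0 : (0:ℝ) < (i:ℝ) := by linarith
    have hE : (0:ℝ) < Real.exp (-ρ * (i:ℝ)) := Real.exp_pos _
    have hden : (0:ℝ) < Real.exp (-ρ * (i:ℝ)) + lam := by positivity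
    have hPnn : (0:ℝ) ≤ (i:ℝ) ^ (-(2*δ)) := Real.rpow_nonneg hi0.le _
    have hq0 : (0:ℝ) ≤ lam / (Real.exp (-ρ * (i:ℝ)) + lam) := by positivity
    have hterm : lam ^ 2 * ((i:ℝ) ^ (-(2*δ)) / (Real.exp (-ρ * (i:ℝ)) + lam) ^ 2)
        = (i:ℝ) ^ (-(2*δ)) * (lam / (Real.exp (-ρ * (i:ℝ)) + lam)) ^ 2 := by
      field_simp
    by_cases him : i ≤ m
    · rw [hg]; simp only [if_pos him]
      set u : ℕ := m - i with hu
      have hucast : (u:ℝ) = (m:ℝ) - (i:ℝ) := by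
        rw [hu]; push_cast [Nat.cast_sub him]; ring
      have hq : lam / (Real.exp (-ρ * (i:ℝ)) + lam) ≤ r ^ u := by
        have h1 : lam / (Real.exp (-ρ * (i:ℝ)) + lam) ≤ lam / Real.exp (-ρ * (i:ℝ)) := by
          apply div_le_div_of_nonneg_left hlam.le hE
          linarith
        have h2 : lam / Real.exp (-ρ * (i:ℝ)) = lam * Real.exp (ρ * (i:ℝ)) := by
          rw [div_eq_mul_inv, ← Real.exp_neg]; ring_nf
        have h3 : lam * Real.exp (ρ * (i:ℝ)) ≤ Real.exp (-(ρ * (m:ℝ))) * Real.exp (ρ * (i:ℝ)) :=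
          mul_le_mul_of_nonneg_right hlam_m (Real.exp_pos _).le
        have h4 : Real.exp (-(ρ * (m:ℝ))) * Real.exp (ρ * (i:ℝ)) = r ^ u := by
          rw [← Real.exp_add, hr, ← Real.exp_nat_mul, hucast]; ring_nf
        rw [h2] at h1; rw [h4] at h3; linarith
      have hrunn : (0:ℝ) ≤ r ^ u := pow_nonneg hr0.le u
      have hq2 : (lam / (Real.exp (-ρ * (i:ℝ)) + lam)) ^ 2 ≤ r ^ u * r ^ u := by
        have := mul_le_mul hq hq hq0 hrunn
        calc (lam / (Real.exp (-ρ * (i:ℝ)) + lam)) ^ 2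
            = (lam / (Real.exp (-ρ * (i:ℝ)) + lam)) * (lam / (Real.exp (-ρ * (i:ℝ)) + lam)) := sq _
          _ ≤ r ^ u * r ^ u := this
      -- the claim : i^{-2δ} * r^u ≤ C2 * m^{-2δ}
      have hclaim : (i:ℝ) ^ (-(2*δ)) * r ^ u ≤ C2 * (m:ℝ) ^ (-(2*δ)) := by
        have hmle : (m:ℝ) ≤ (i:ℝ) * (1 + (u:ℝ)) := by
          have hmiu : (m:ℝ) = (i:ℝ) + (u:ℝ) := by rw [hucast]; ring
          have h5 : (u:ℝ) ≤ (i:ℝ) * (u:ℝ) := le_mul_of_one_le_left (Nat.cast_nonneg u) hiR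
          rw [hmiu]; nlinarith
        have hu1 : (0:ℝ) < 1 + (u:ℝ) := by positivity
        have h2δ : (m:ℝ) ^ (2*δ) ≤ (i:ℝ) ^ (2*δ) * ((1:ℝ)+(u:ℝ)) ^ (2*δ) := by
          rw [← Real.mul_rpow hi0.le hu1.le]
          exact Real.rpow_le_rpow (by positivity) hmle hδ0
        have h3 : ((1:ℝ)+(u:ℝ)) ^ (2*δ) * r ^ u ≤ C2 := by
          have hx : (0:ℝ) < ρ*(1+(u:ℝ)) := by positivity
          have h4 := aux_pow_exp (2*δ) (ρ*(1+(u:ℝ))) hδ0 hx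
          rw [Real.mul_rpow hρ.le hu1.le] at h4
          have hru : r ^ u = Real.exp (-(ρ*(u:ℝ))) := by
            rw [hr, ← Real.exp_nat_mul]; ring_nf
          have hsplit : Real.exp (-(ρ*(1+(u:ℝ)))) = Real.exp (-ρ) * Real.exp (-(ρ*(u:ℝ))) := by
            rw [← Real.exp_add]; ring_nf
          rw [hsplit] at h4
          -- h4 : ρ^{2δ} * (1+u)^{2δ} * (exp(-ρ) * exp(-(ρu))) ≤ Kfac
          have hexpm : Real.exp (-ρ) * Real.exp ρ = 1 := by rw [← Real.exp_add]; simp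
          have key2 : (ρ ^ (2*δ) * ((1:ℝ)+(u:ℝ)) ^ (2*δ)
                * (Real.exp (-ρ) * Real.exp (-(ρ*(u:ℝ))))) * Real.exp ρ
              = ((1:ℝ)+(u:ℝ)) ^ (2*δ) * Real.exp (-(ρ*(u:ℝ))) * ρ ^ (2*δ) := by
            calc (ρ ^ (2*δ) * ((1:ℝ)+(u:ℝ)) ^ (2*δ)
                  * (Real.exp (-ρ) * Real.exp (-(ρ*(u:ℝ))))) * Real.exp ρ
                = ((1:ℝ)+(u:ℝ)) ^ (2*δ) * Real.exp (-(ρ*(u:ℝ))) * ρ ^ (2*δ)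
                  * (Real.exp (-ρ) * Real.exp ρ) := by ring
              _ = ((1:ℝ)+(u:ℝ)) ^ (2*δ) * Real.exp (-(ρ*(u:ℝ))) * ρ ^ (2*δ) := by
                  rw [hexpm, mul_one]
          rw [hC2, hK1, hru, le_div_iff₀ hρ2δ, ← key2]
          exact mul_le_mul_of_nonneg_right h4 (Real.exp_pos ρ).le
        -- combine
        have hI : (0:ℝ) < (i:ℝ) ^ (2*δ) := Real.rpow_pos_of_pos hi0 _
        have hM : (0:ℝ) < (m:ℝ) ^ (2*δ) := Real.rpow_pos_of_pos (by linarith) _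
        have ei : (i:ℝ) ^ (-(2*δ)) = 1 / (i:ℝ) ^ (2*δ) := by
          rw [Real.rpow_neg hi0.le, one_div]
        have em : (m:ℝ) ^ (-(2*δ)) = 1 / (m:ℝ) ^ (2*δ) := by
          rw [Real.rpow_neg (by linarith : (0:ℝ) ≤ (m:ℝ)), one_div]
        rw [ei, em]
        rw [show (1:ℝ) / (i:ℝ) ^ (2*δ) * r ^ u = r ^ u / (i:ℝ) ^ (2*δ) by ring,
            show C2 * ((1:ℝ) / (m:ℝ) ^ (2*δ)) = C2 / (m:ℝ) ^ (2*δ) by ring,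
            div_le_div_iff₀ hI hM]
        calc r ^ u * (m:ℝ) ^ (2*δ) ≤ r ^ u * ((i:ℝ) ^ (2*δ) * ((1:ℝ)+(u:ℝ)) ^ (2*δ)) :=
              mul_le_mul_of_nonneg_left h2δ hrunn
          _ = (((1:ℝ)+(u:ℝ)) ^ (2*δ) * r ^ u) * (i:ℝ) ^ (2*δ) := by ring
          _ ≤ C2 * (i:ℝ) ^ (2*δ) := mul_le_mul_of_nonneg_right h3 hI.le
      calc lam ^ 2 * ((i:ℝ) ^ (-(2*δ)) / (Real.exp (-ρ * (i:ℝ)) + lam) ^ 2)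
          = (i:ℝ) ^ (-(2*δ)) * (lam / (Real.exp (-ρ * (i:ℝ)) + lam)) ^ 2 := hterm
        _ ≤ (i:ℝ) ^ (-(2*δ)) * (r ^ u * r ^ u) := mul_le_mul_of_nonneg_left hq2 hPnn
        _ = ((i:ℝ) ^ (-(2*δ)) * r ^ u) * r ^ u := by ring
        _ ≤ (C2 * (m:ℝ) ^ (-(2*δ))) * r ^ u := mul_le_mul_of_nonneg_right hclaim hrunn
    · rw [hg]; simp only [if_neg him]
      have hq : lam / (Real.exp (-ρ * (i:ℝ)) + lam) ≤ 1 := by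
        rw [div_le_one hden]; linarith
      have hq2 : (lam / (Real.exp (-ρ * (i:ℝ)) + lam)) ^ 2 ≤ 1 := by
        calc (lam / (Real.exp (-ρ * (i:ℝ)) + lam)) ^ 2
            ≤ 1 ^ 2 := pow_le_pow_left₀ hq0 hq 2
          _ = 1 := one_pow 2
      rw [hterm]
      calc (i:ℝ) ^ (-(2*δ)) * (lam / (Real.exp (-ρ * (i:ℝ)) + lam)) ^ 2
          ≤ (i:ℝ) ^ (-(2*δ)) * 1 := mul_le_mul_of_nonneg_left hq2 hPnn
        _ = (i:ℝ) ^ (-(2*δ)) := mul_one _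
  -- sum bounds
  have hmnn : (0:ℝ) ≤ (m:ℝ) ^ (-(2*δ)) := Real.rpow_nonneg (by linarith) _
  have hgeo : ∑ i ∈ Finset.Icc 1 m, r ^ (m - i) ≤ (1-r)⁻¹ := by
    have hsub : Finset.Icc 1 m ⊆ Finset.range (m+1) := by
      intro i hi
      obtain ⟨_, h2⟩ := Finset.mem_Icc.mp hi
      exact Finset.mem_range.mpr (by omega)
    have h1 : ∑ i ∈ Finset.Icc 1 m, r ^ (m - i) ≤ ∑ i ∈ Finset.range (m+1), r ^ (m - i) :=
      Finset.sum_le_sum_of_subset_of_nonneg hsub (fun i _ _ => pow_nonneg hr0.le _)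
    have h2 : ∑ i ∈ Finset.range (m+1), r ^ (m - i) = ∑ i ∈ Finset.range (m+1), r ^ i := by
      have := Finset.sum_range_reflect (fun j => r ^ j) (m+1)
      simpa using this
    have h3 : ∑ i ∈ Finset.range (m+1), r ^ i ≤ (1-r)⁻¹ := by
      rw [← tsum_geometric_of_lt_one hr0.le hr1]
      exact Summable.sum_le_tsum _ (fun i _ => pow_nonneg hr0.le i)
        (summable_geometric_of_lt_one hr0.le hr1)
    linarith
  have hsplit : ∑ i ∈ Finset.Icc 1 n, g i
      ≤ C2 * (m:ℝ) ^ (-(2*δ)) * (1-r)⁻¹ + (m:ℝ) ^ (-(2*δ-1)) / (2*δ-1) := by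
    rw [← Finset.sum_filter_add_sum_filter_not (Finset.Icc 1 n) (fun i => i ≤ m) g]
    have part1 : ∑ i ∈ (Finset.Icc 1 n).filter (fun i => i ≤ m), g i
        ≤ C2 * (m:ℝ) ^ (-(2*δ)) * (1-r)⁻¹ := by
      have e1 : ∑ i ∈ (Finset.Icc 1 n).filter (fun i => i ≤ m), g i
          = ∑ i ∈ (Finset.Icc 1 n).filter (fun i => i ≤ m), C2 * (m:ℝ) ^ (-(2*δ)) * r ^ (m-i) := by
        apply Finset.sum_congr rfl
        intro i hi
        obtain ⟨_, him⟩ := Finset.mem_filter.mp hi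
        rw [hg]; simp only [if_pos him]
      rw [e1]
      have e2 : ∑ i ∈ (Finset.Icc 1 n).filter (fun i => i ≤ m), C2 * (m:ℝ) ^ (-(2*δ)) * r ^ (m-i)
          ≤ ∑ i ∈ Finset.Icc 1 m, C2 * (m:ℝ) ^ (-(2*δ)) * r ^ (m-i) := by
        apply Finset.sum_le_sum_of_subset_of_nonneg
        · intro i hi
          obtain ⟨hicc, him⟩ := Finset.mem_filter.mp hi
          obtain ⟨h1, _⟩ := Finset.mem_Icc.mp hicc
          exact Finset.mem_Icc.mpr ⟨h1, him⟩
        · intro i _ _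
          have := pow_nonneg hr0.le (m - i)
          positivity
      have e3 : ∑ i ∈ Finset.Icc 1 m, C2 * (m:ℝ) ^ (-(2*δ)) * r ^ (m-i)
          = C2 * (m:ℝ) ^ (-(2*δ)) * ∑ i ∈ Finset.Icc 1 m, r ^ (m-i) := by
        rw [Finset.mul_sum]
      have e4 : C2 * (m:ℝ) ^ (-(2*δ)) * ∑ i ∈ Finset.Icc 1 m, r ^ (m-i)
          ≤ C2 * (m:ℝ) ^ (-(2*δ)) * (1-r)⁻¹ :=
        mul_le_mul_of_nonneg_left hgeo (by positivity)
      linarith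
    have part2 : ∑ i ∈ (Finset.Icc 1 n).filter (fun i => ¬ i ≤ m), g i
        ≤ (m:ℝ) ^ (-(2*δ-1)) / (2*δ-1) := by
      have e1 : ∑ i ∈ (Finset.Icc 1 n).filter (fun i => ¬ i ≤ m), g i
          = ∑ i ∈ (Finset.Icc 1 n).filter (fun i => ¬ i ≤ m), (i:ℝ) ^ (-(2*δ)) := by
        apply Finset.sum_congr rfl
        intro i hi
        obtain ⟨_, him⟩ := Finset.mem_filter.mp hi
        rw [hg]; simp only [if_neg him]
      rw [e1]
      have e2 : ∑ i ∈ (Finset.Icc 1 n).filter (fun i => ¬ i ≤ m), (i:ℝ) ^ (-(2*δ))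
          ≤ ∑ i ∈ Finset.Icc (m+1) n, (i:ℝ) ^ (-(2*δ)) := by
        apply Finset.sum_le_sum_of_subset_of_nonneg
        · intro i hi
          obtain ⟨hicc, him⟩ := Finset.mem_filter.mp hi
          obtain ⟨_, h2⟩ := Finset.mem_Icc.mp hicc
          exact Finset.mem_Icc.mpr ⟨by omega, h2⟩
        · intro i hi _
          obtain ⟨h1, _⟩ := Finset.mem_Icc.mp hi
          have : (0:ℝ) < (i:ℝ) := by exact_mod_cast Nat.lt_of_lt_of_le (by omega) h1
          exact Real.rpow_nonneg this.le _
      have e3 := aux_tail δ hδ m hm1 n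
      have e4 : (0:ℝ) ≤ ((max m n : ℕ):ℝ) ^ (-(2*δ-1)) := Real.rpow_nonneg (Nat.cast_nonneg _) _
      have e5 : ((m:ℝ) ^ (-(2*δ-1)) - ((max m n : ℕ):ℝ) ^ (-(2*δ-1))) / (2*δ-1)
          ≤ (m:ℝ) ^ (-(2*δ-1)) / (2*δ-1) := by
        exact (div_le_div_iff_of_pos_right ha).mpr (by linarith)
      linarith
    linarith
  -- assemble the first inequality
  have hmain : lam ^ 2 * ∑ i ∈ Finset.Icc 1 n,
      (i:ℝ) ^ (-(2*δ)) / (Real.exp (-ρ * (i:ℝ)) + lam) ^ 2 ≤ C * L ^ (1-2*δ) := by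
    have s1 : lam ^ 2 * ∑ i ∈ Finset.Icc 1 n,
        (i:ℝ) ^ (-(2*δ)) / (Real.exp (-ρ * (i:ℝ)) + lam) ^ 2
        = ∑ i ∈ Finset.Icc 1 n,
          lam ^ 2 * ((i:ℝ) ^ (-(2*δ)) / (Real.exp (-ρ * (i:ℝ)) + lam) ^ 2) := by
      rw [Finset.mul_sum]
    have s2 : ∑ i ∈ Finset.Icc 1 n,
        lam ^ 2 * ((i:ℝ) ^ (-(2*δ)) / (Real.exp (-ρ * (i:ℝ)) + lam) ^ 2)
        ≤ ∑ i ∈ Finset.Icc 1 n, g i := Finset.sum_le_sum hpoint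
    -- m exponent bounds
    have hm2δ : (m:ℝ) ^ (-(2*δ)) ≤ (m:ℝ) ^ (1-2*δ) :=
      Real.rpow_le_rpow_of_exponent_le hm1R (by linarith)
    have hmex : (m:ℝ) ^ (-(2*δ-1)) = (m:ℝ) ^ (1-2*δ) := by
      rw [show -(2*δ-1) = 1-2*δ by ring]
    have hmLbound : (m:ℝ) ^ (1-2*δ) ≤ (2*ρ) ^ (2*δ-1) * L ^ (1-2*δ) := by
      have h1 : (m:ℝ) ^ (1-2*δ) ≤ (L/(2*ρ)) ^ (1-2*δ) :=
        Real.rpow_le_rpow_of_nonpos (by positivity) hmhalf (by linarith)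
      have h2 : (L/(2*ρ)) ^ (1-2*δ) = (2*ρ) ^ (2*δ-1) * L ^ (1-2*δ) := by
        rw [Real.div_rpow hL0.le (by positivity : (0:ℝ) ≤ 2*ρ),
          show (2*δ-1) = -(1-2*δ) by ring, Real.rpow_neg (by positivity : (0:ℝ) ≤ 2*ρ)]
        field_simp
      linarith
    have hcoef1 : (0:ℝ) < C2 / (1-r) := by
      apply div_pos hC2pos; linarith
    have hcoef2 : (0:ℝ) < 1/(2*δ-1) := by positivity
    have hLnn : (0:ℝ) ≤ L ^ (1-2*δ) := Real.rpow_nonneg hL0.le _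
    have final : C2 * (m:ℝ) ^ (-(2*δ)) * (1-r)⁻¹ + (m:ℝ) ^ (-(2*δ-1)) / (2*δ-1)
        ≤ C * L ^ (1-2*δ) := by
      have t1 : C2 * (m:ℝ) ^ (-(2*δ)) * (1-r)⁻¹ ≤ (C2 / (1-r)) * (m:ℝ) ^ (1-2*δ) := by
        have : C2 * (m:ℝ) ^ (-(2*δ)) * (1-r)⁻¹ = (C2 * (1-r)⁻¹) * (m:ℝ) ^ (-(2*δ)) := by ring
        rw [this, div_eq_mul_inv]
        exact mul_le_mul_of_nonneg_left hm2δ (by positivity)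
      have t2 : (m:ℝ) ^ (-(2*δ-1)) / (2*δ-1) = (1/(2*δ-1)) * (m:ℝ) ^ (1-2*δ) := by
        rw [hmex]; ring
      have t3 : (C2 / (1-r) + 1/(2*δ-1)) * (m:ℝ) ^ (1-2*δ)
          ≤ (C2 / (1-r) + 1/(2*δ-1)) * ((2*ρ) ^ (2*δ-1) * L ^ (1-2*δ)) :=
        mul_le_mul_of_nonneg_left hmLbound (by positivity)
      have t4 : (C2 / (1-r) + 1/(2*δ-1)) * ((2*ρ) ^ (2*δ-1) * L ^ (1-2*δ))
          = C * L ^ (1-2*δ) := by rw [hC]; ring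
      linarith
    calc lam ^ 2 * ∑ i ∈ Finset.Icc 1 n,
        (i:ℝ) ^ (-(2*δ)) / (Real.exp (-ρ * (i:ℝ)) + lam) ^ 2
        = ∑ i ∈ Finset.Icc 1 n,
          lam ^ 2 * ((i:ℝ) ^ (-(2*δ)) / (Real.exp (-ρ * (i:ℝ)) + lam) ^ 2) := s1
      _ ≤ ∑ i ∈ Finset.Icc 1 n, g i := s2
      _ ≤ C2 * (m:ℝ) ^ (-(2*δ)) * (1-r)⁻¹ + (m:ℝ) ^ (-(2*δ-1)) / (2*δ-1) := hsplit
      _ ≤ C * L ^ (1-2*δ) := final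
  refine ⟨hmain, ?_⟩
  have hn0 : (0:ℝ) ≤ (n:ℝ) := Nat.cast_nonneg n
  calc (n:ℝ) * lam ^ 2 * ∑ i ∈ Finset.Icc 1 n,
      (i:ℝ) ^ (-(2*δ)) / (Real.exp (-ρ * (i:ℝ)) + lam) ^ 2
      = (n:ℝ) * (lam ^ 2 * ∑ i ∈ Finset.Icc 1 n,
        (i:ℝ) ^ (-(2*δ)) / (Real.exp (-ρ * (i:ℝ)) + lam) ^ 2) := by ring
    _ ≤ (n:ℝ) * (C * L ^ (1-2*δ)) := mul_le_mul_of_nonneg_left hmain hn0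
    _ = C * ((n:ℝ) * L ^ (1-2*δ)) := by ring
end
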